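/- arXiv:1805.05012 — 2 statements merged into one kernel-verified Lean document; each statement's English description precedes it below -/
import Mathlib

section
/- Let κ = (m+1)/(m−μ+1). For every t ≥ 0 and every integer n ≥ m, K(t, n−m) − m − mκ ≤ C(t,n) ≤ μ + K(t,n) + mκ. -/
open Finset MeasureTheory intervalIntegral Real Filter

noncomputable section

/-- The CDF `F(k) = ∑_{j=1}^k f(j)` of the bundle-size pmf `f`. -/
def cdfF (f : ℕ → ℝ) (k : ℕ) : ℝ := ∑ j ∈ Finset.Icc 1 k, f j

/-- `R(t,n)`: the expected number of remaining packages at time `t` starting from `n`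
packages on a line, given via its closed-form solution in terms of the constants `γ`. -/
def Rfun (f : ℕ → ℝ) (γ : ℕ → ℕ → ℝ) (lam t : ℝ) (n : ℕ) : ℝ :=
  if 0 < cdfF f n then
    ∑ i ∈ Finset.Icc 1 n, γ n i * Real.exp (-(lam * ∑ j ∈ Finset.Icc 1 i, cdfF f j) * t)
  else (n : ℝ)

/-- `K(t,n) = n - R(t,n)`. -/
def Kfun (f : ℕ → ℝ) (γ : ℕ → ℕ → ℝ) (lam t : ℝ) (n : ℕ) : ℝ :=
  (n : ℝ) - Rfun f γ lam t n

/-- The mean `μ = ∑_{k=1}^m k f(k)` of the bundle-size distribution. -/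
def muF (f : ℕ → ℝ) (m : ℕ) : ℝ := ∑ k ∈ Finset.Icc 1 m, (k : ℝ) * f k

/-- `C(t,n)`: the expected number of packages picked up by time `t` starting from `n`
packages on a circle, in closed form via the constants `γ̃`. -/
def Cfun (f : ℕ → ℝ) (tγ : ℕ → ℕ → ℝ) (lam t : ℝ) (n : ℕ) : ℝ :=
  (n : ℝ)
    - (∑ i ∈ Finset.Icc 1 (n - 1),
        tγ n i * Real.exp (-(lam * ∑ j ∈ Finset.Icc 1 i, cdfF f j) * t))
    - tγ n n * Real.exp (-(lam * (n : ℝ)) * t)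

/-- partial sums of the CDF -/
def Gp (f : ℕ → ℝ) (i : ℕ) : ℝ := ∑ j ∈ Finset.Icc 1 i, cdfF f j

/-- the quantity `D_j = j G_j - 2 ∑_{s<j} G_s` -/
def Dp (f : ℕ → ℝ) (j : ℕ) : ℝ := (j : ℝ) * Gp f j - 2 * ∑ s ∈ Finset.Icc 1 (j - 1), Gp f s

section Flemmas

variable {m : ℕ} {f : ℕ → ℝ}

lemma cdfF_zero : cdfF f 0 = 0 := by simp [cdfF]

lemma cdfF_succ (k : ℕ) : cdfF f (k + 1) = cdfF f k + f (k + 1) := by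
  simpa [cdfF] using Finset.sum_Icc_succ_top (by omega : 1 ≤ k + 1) f

lemma cdfF_nonneg (hf : ∀ k, 0 ≤ f k) (k : ℕ) : 0 ≤ cdfF f k :=
  Finset.sum_nonneg fun j _ => hf j

lemma cdfF_mono (hf : ∀ k, 0 ≤ f k) : Monotone (cdfF f) := by
  intro a b hab
  exact Finset.sum_le_sum_of_subset_of_nonneg (Finset.Icc_subset_Icc le_rfl hab)
    (fun j _ _ => hf j)

lemma cdfF_eq_one (hm : 1 ≤ m) (hsum : ∑ k ∈ Finset.Icc 1 m, f k = 1)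
    (hsupp : ∀ k : ℕ, k = 0 ∨ m < k → f k = 0) {k : ℕ} (hk : m ≤ k) :
    cdfF f k = 1 := by
  have : cdfF f k = ∑ j ∈ Finset.Icc 1 m, f j := by
    refine (Finset.sum_subset (Finset.Icc_subset_Icc le_rfl hk) ?_).symm
    intro x hx hx'
    simp only [Finset.mem_Icc] at hx hx'
    exact hsupp x (Or.inr (by omega))
  rw [this, hsum]

lemma cdfF_le_one (hf : ∀ k, 0 ≤ f k) (hm : 1 ≤ m)
    (hsum : ∑ k ∈ Finset.Icc 1 m, f k = 1)
    (hsupp : ∀ k : ℕ, k = 0 ∨ m < k → f k = 0) (k : ℕ) :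
    cdfF f k ≤ 1 := by
  rcases le_or_gt m k with h | h
  · exact le_of_eq (cdfF_eq_one hm hsum hsupp h)
  · calc cdfF f k ≤ cdfF f m := cdfF_mono hf h.le
      _ = 1 := cdfF_eq_one hm hsum hsupp le_rfl

lemma Gp_zero : Gp f 0 = 0 := by simp [Gp]

lemma Gp_succ (i : ℕ) : Gp f (i + 1) = Gp f i + cdfF f (i + 1) := by
  simpa [Gp] using Finset.sum_Icc_succ_top (by omega : 1 ≤ i + 1) (cdfF f)

lemma Gp_nonneg (hf : ∀ k, 0 ≤ f k) (i : ℕ) : 0 ≤ Gp f i :=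
  Finset.sum_nonneg fun j _ => cdfF_nonneg hf j

lemma Gp_mono (hf : ∀ k, 0 ≤ f k) : Monotone (Gp f) := by
  intro a b hab
  exact Finset.sum_le_sum_of_subset_of_nonneg (Finset.Icc_subset_Icc le_rfl hab)
    (fun j _ _ => cdfF_nonneg hf j)

lemma Gp_le (hf : ∀ k, 0 ≤ f k) (hm : 1 ≤ m)
    (hsum : ∑ k ∈ Finset.Icc 1 m, f k = 1)
    (hsupp : ∀ k : ℕ, k = 0 ∨ m < k → f k = 0) (i : ℕ) :
    Gp f i ≤ (i : ℝ) := by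
  induction i with
  | zero => simp [Gp_zero]
  | succ n ih =>
      rw [Gp_succ]
      push_cast
      have := cdfF_le_one hf hm hsum hsupp (n + 1)
      linarith

/-- superadditivity of G -/
lemma Gp_superadd (hf : ∀ k, 0 ≤ f k) (a b : ℕ) : Gp f a + Gp f b ≤ Gp f (a + b) := by
  induction b with
  | zero => simp [Gp_zero]
  | succ n ih =>
      rw [Gp_succ]
      have h2 : a + (n+1) = (a + n) + 1 := by omega
      rw [h2, Gp_succ]
      have : cdfF f (n + 1) ≤ cdfF f (a + n + 1) := cdfF_mono hf (by omega)
      linarith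

/-- G increments at most 1 per step -/
lemma Gp_diff_le (hf : ∀ k, 0 ≤ f k) (hm : 1 ≤ m)
    (hsum : ∑ k ∈ Finset.Icc 1 m, f k = 1)
    (hsupp : ∀ k : ℕ, k = 0 ∨ m < k → f k = 0) (s d : ℕ) :
    Gp f (s + d) ≤ Gp f s + (d : ℝ) := by
  induction d with
  | zero => simp
  | succ n ih =>
      have h2 : s + (n+1) = (s + n) + 1 := by omega
      rw [h2, Gp_succ]
      push_cast
      have := cdfF_le_one hf hm hsum hsupp (s + n + 1)
      linarith

end Flemmas
section Dlemmas

variable {m : ℕ} {f : ℕ → ℝ}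

/-- `∑_{l=1}^{j} F(l)(j+1-l) = ∑_{s=1}^{j} G_s` -/
lemma sum_cdfF_lin (j : ℕ) :
    ∑ l ∈ Finset.Icc 1 j, cdfF f l * ((j : ℝ) + 1 - l) = ∑ s ∈ Finset.Icc 1 j, Gp f s := by
  induction j with
  | zero => simp
  | succ n ih =>
      rw [Finset.sum_Icc_succ_top (by omega : 1 ≤ n + 1),
          Finset.sum_Icc_succ_top (by omega : 1 ≤ n + 1)]
      have h1 : ∑ l ∈ Finset.Icc 1 n, cdfF f l * ((n + 1 : ℝ) + 1 - l)
          = (∑ l ∈ Finset.Icc 1 n, cdfF f l * ((n : ℝ) + 1 - l))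
            + ∑ l ∈ Finset.Icc 1 n, cdfF f l := by
        rw [← Finset.sum_add_distrib]
        apply Finset.sum_congr rfl; intro l _; push_cast; ring
      push_cast
      rw [h1, ih]
      have : Gp f (n + 1) = Gp f n + cdfF f (n + 1) := Gp_succ n
      have hG : (Gp f n : ℝ) = ∑ l ∈ Finset.Icc 1 n, cdfF f l := rfl
      push_cast at this ⊢
      rw [this, ← hG]
      ring

/-- `∑_{l=1}^{j} f(l)(j+1-l) = G_j` -/
lemma sum_f_lin (j : ℕ) :
    ∑ l ∈ Finset.Icc 1 j, f l * ((j : ℝ) + 1 - l) = Gp f j := by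
  induction j with
  | zero => simp [Gp_zero]
  | succ n ih =>
      rw [Finset.sum_Icc_succ_top (by omega : 1 ≤ n + 1)]
      have h1 : ∑ l ∈ Finset.Icc 1 n, f l * ((n + 1 : ℝ) + 1 - l)
          = (∑ l ∈ Finset.Icc 1 n, f l * ((n : ℝ) + 1 - l))
            + ∑ l ∈ Finset.Icc 1 n, f l := by
        rw [← Finset.sum_add_distrib]
        apply Finset.sum_congr rfl; intro l _; push_cast; ring
      push_cast
      rw [h1, ih]
      have hF : cdfF f (n + 1) = cdfF f n + f (n + 1) := cdfF_succ n
      have hFd : (cdfF f n : ℝ) = ∑ l ∈ Finset.Icc 1 n, f l := rfl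
      rw [Gp_succ, hF, ← hFd]
      push_cast
      ring

/-- `μ = m + 1 - G_m` -/
lemma muF_eq (hsum : ∑ k ∈ Finset.Icc 1 m, f k = 1) :
    muF f m = (m : ℝ) + 1 - Gp f m := by
  have h := sum_f_lin (f := f) m
  have h2 : ∑ l ∈ Finset.Icc 1 m, f l * ((m : ℝ) + 1 - l)
      = ((m : ℝ) + 1) * (∑ l ∈ Finset.Icc 1 m, f l) - ∑ l ∈ Finset.Icc 1 m, (l : ℝ) * f l := by
    rw [Finset.mul_sum, ← Finset.sum_sub_distrib]
    apply Finset.sum_congr rfl; intro l _; ring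
  rw [h2, hsum] at h
  simp only [muF]
  linarith

lemma Gp_m_pos (hf : ∀ k, 0 ≤ f k) (hm : 1 ≤ m)
    (hsum : ∑ k ∈ Finset.Icc 1 m, f k = 1)
    (hsupp : ∀ k : ℕ, k = 0 ∨ m < k → f k = 0) :
    1 ≤ Gp f m := by
  have h1 : cdfF f m = 1 := cdfF_eq_one hm hsum hsupp le_rfl
  calc (1 : ℝ) = cdfF f m := h1.symm
    _ ≤ Gp f m := by
        refine Finset.single_le_sum (f := fun j => cdfF f j) (fun j _ => cdfF_nonneg hf j) ?_
        simp [Finset.mem_Icc]; omega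

lemma muF_ge_one (hf : ∀ k, 0 ≤ f k) (hm : 1 ≤ m)
    (hsum : ∑ k ∈ Finset.Icc 1 m, f k = 1)
    (hsupp : ∀ k : ℕ, k = 0 ∨ m < k → f k = 0) :
    1 ≤ muF f m := by
  rw [muF_eq hsum]
  have := Gp_le hf hm hsum hsupp m
  linarith

lemma muF_le_m (hf : ∀ k, 0 ≤ f k) (hm : 1 ≤ m)
    (hsum : ∑ k ∈ Finset.Icc 1 m, f k = 1)
    (hsupp : ∀ k : ℕ, k = 0 ∨ m < k → f k = 0) :
    muF f m ≤ (m : ℝ) := by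
  rw [muF_eq hsum]
  have := Gp_m_pos hf hm hsum hsupp
  linarith

/-- `j - G_j ≤ μ - 1` for all j -/
lemma Gp_ge_lin (hf : ∀ k, 0 ≤ f k) (hm : 1 ≤ m)
    (hsum : ∑ k ∈ Finset.Icc 1 m, f k = 1)
    (hsupp : ∀ k : ℕ, k = 0 ∨ m < k → f k = 0) (j : ℕ) :
    (j : ℝ) - Gp f j ≤ muF f m - 1 := by
  rw [muF_eq hsum]
  -- j - G_j is nondecreasing in j, and for j ≥ m equals m - G_m
  have key : ∀ i : ℕ, (i : ℝ) - Gp f i ≤ (m : ℝ) - Gp f m := by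
    intro i
    rcases le_or_gt i m with h | h
    · -- monotone: increments 1 - F ≥ 0
      have mono : ∀ d : ℕ, (i : ℝ) - Gp f i ≤ ((i + d : ℕ) : ℝ) - Gp f (i + d) := by
        intro d
        induction d with
        | zero => simp
        | succ n ih =>
            have h2 : i + (n + 1) = (i + n) + 1 := by omega
            rw [h2, Gp_succ]
            have := cdfF_le_one hf hm hsum hsupp (i + n + 1)
            push_cast at ih ⊢
            linarith
      have := mono (m - i)
      have h3 : i + (m - i) = m := by omega
      rw [h3] at this
      exact this
    · -- for j > m, the quantity is constant: G increments by exactly 1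
      have const : ∀ d : ℕ, ((m + d : ℕ) : ℝ) - Gp f (m + d) = (m : ℝ) - Gp f m := by
        intro d
        induction d with
        | zero => simp
        | succ n ih =>
            have h2 : m + (n + 1) = (m + n) + 1 := by omega
            rw [h2, Gp_succ, cdfF_eq_one hm hsum hsupp (by omega : m ≤ m + n + 1)]
            push_cast at ih ⊢
            linarith
      have := const (i - m)
      have h3 : m + (i - m) = i := by omega
      rw [h3] at this
      exact le_of_eq this
  have := key j
  linarith

/-- increments of D -/
lemma Dp_succ (j : ℕ) :
    Dp f (j + 1) = Dp f j + (((j : ℝ) + 1) * cdfF f (j + 1) - Gp f j) := by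
  rcases Nat.eq_zero_or_pos j with rfl | hj
  · simp [Dp, Gp_zero, Gp_succ, cdfF_zero]
  · have h1 : j + 1 - 1 = (j - 1) + 1 := by omega
    simp only [Dp, h1]
    rw [Finset.sum_Icc_succ_top (by omega : 1 ≤ (j - 1) + 1), Gp_succ]
    have h2 : j - 1 + 1 = j := by omega
    rw [h2]
    push_cast
    ring

lemma Dp_zero : Dp f 0 = 0 := by simp [Dp, Gp_zero]

/-- the increment `d_s = s F(s) - G_{s-1}` is nonneg -/
lemma dinc_nonneg (hf : ∀ k, 0 ≤ f k) (j : ℕ) :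
    0 ≤ ((j : ℝ) + 1) * cdfF f (j + 1) - Gp f j := by
  have h : Gp f j ≤ (j : ℝ) * cdfF f (j + 1) := by
    have : ∀ s ∈ Finset.Icc 1 j, cdfF f s ≤ cdfF f (j + 1) := by
      intro s hs; simp only [Finset.mem_Icc] at hs
      exact cdfF_mono hf (by omega)
    calc Gp f j = ∑ s ∈ Finset.Icc 1 j, cdfF f s := rfl
      _ ≤ ∑ _s ∈ Finset.Icc 1 j, cdfF f (j + 1) := Finset.sum_le_sum this
      _ = (j : ℝ) * cdfF f (j + 1) := by
          rw [Finset.sum_const, Nat.card_Icc]; simp [nsmul_eq_mul]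
  nlinarith [cdfF_nonneg hf (j + 1)]

/-- increments are nondecreasing -/
lemma dinc_mono (hf : ∀ k, 0 ≤ f k) (j : ℕ) :
    ((j : ℝ) + 1) * cdfF f (j + 1) - Gp f j
      ≤ ((j : ℝ) + 2) * cdfF f (j + 2) - Gp f (j + 1) := by
  rw [Gp_succ]
  have := cdfF_mono hf (by omega : j + 1 ≤ j + 2)
  nlinarith

lemma Dp_nonneg' (hf : ∀ k, 0 ≤ f k) (j : ℕ) : 0 ≤ Dp f j := by
  induction j with
  | zero => simp [Dp_zero]
  | succ n ih =>
      rw [Dp_succ]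
      have := dinc_nonneg hf n
      linarith

lemma Dp_mono (hf : ∀ k, 0 ≤ f k) {a b : ℕ} (hab : a ≤ b) : Dp f a ≤ Dp f b := by
  induction b with
  | zero => simp_all
  | succ n ih =>
      rcases Nat.lt_or_ge a (n + 1) with h | h
      · have := ih (by omega)
        rw [Dp_succ]
        have := dinc_nonneg hf n
        linarith
      · have : a = n + 1 := by omega
        rw [this]

/-- superadditivity of D -/
lemma Dp_superadd (hf : ∀ k, 0 ≤ f k) (a b : ℕ) : Dp f a + Dp f b ≤ Dp f (a + b) := by
  induction b with
  | zero => simp [Dp_zero]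
  | succ n ih =>
      have h2 : a + (n + 1) = (a + n) + 1 := by omega
      rw [h2, Dp_succ, Dp_succ]
      have hd : ((n : ℝ) + 1) * cdfF f (n + 1) - Gp f n
          ≤ (((a + n : ℕ) : ℝ) + 1) * cdfF f (a + n + 1) - Gp f (a + n) := by
        -- increments are monotone: iterate dinc_mono
        have gen : ∀ c : ℕ, ((n : ℝ) + 1) * cdfF f (n + 1) - Gp f n
            ≤ (((n + c : ℕ) : ℝ) + 1) * cdfF f (n + c + 1) - Gp f (n + c) := by
          intro c
          induction c with
          | zero => simp
          | succ k ihc =>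
              have := dinc_mono hf (n + k)
              have h3 : n + (k + 1) = (n + k) + 1 := by omega
              rw [h3]
              push_cast at ihc this ⊢
              have h4 : (n : ℝ) + k + 1 + 1 = (n:ℝ) + k + 2 := by ring
              linarith
        have := gen a
        have h5 : n + a = a + n := by omega
        rw [h5] at this
        exact this
      push_cast at hd ⊢
      linarith

end Dlemmas
section D2lemmas

variable {m : ℕ} {f : ℕ → ℝ}

lemma sum_reflect (j : ℕ) (g : ℕ → ℝ) :
    ∑ l ∈ Finset.Icc 1 (j - 1), g (j - l) = ∑ l ∈ Finset.Icc 1 (j - 1), g l := by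
  apply Finset.sum_nbij' (fun l => j - l) (fun l => j - l)
  all_goals intro a ha
  all_goals simp only [Finset.mem_Icc] at *
  all_goals try omega

lemma dinc_le (hf : ∀ k, 0 ≤ f k) (hm : 1 ≤ m)
    (hsum : ∑ k ∈ Finset.Icc 1 m, f k = 1)
    (hsupp : ∀ k : ℕ, k = 0 ∨ m < k → f k = 0) (j : ℕ) :
    ((j : ℝ) + 1) * cdfF f (j + 1) - Gp f j ≤ muF f m := by
  have h1 : cdfF f (j + 1) ≤ 1 := cdfF_le_one hf hm hsum hsupp (j + 1)
  have h2 : (j : ℝ) - Gp f j ≤ muF f m - 1 := Gp_ge_lin hf hm hsum hsupp j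
  have h3 : 0 ≤ cdfF f (j + 1) := cdfF_nonneg hf (j + 1)
  nlinarith

/-- N2 : `D_j ≤ μ j` -/
lemma Dp_le (hf : ∀ k, 0 ≤ f k) (hm : 1 ≤ m)
    (hsum : ∑ k ∈ Finset.Icc 1 m, f k = 1)
    (hsupp : ∀ k : ℕ, k = 0 ∨ m < k → f k = 0) (j : ℕ) :
    Dp f j ≤ muF f m * j := by
  induction j with
  | zero => simp [Dp_zero]
  | succ n ih =>
      rw [Dp_succ]
      have := dinc_le hf hm hsum hsupp n
      push_cast
      linarith

/-- N3 : `G_j D_j - 2 ∑_{l<j} F(l) D_{j-l} ≥ 0` -/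
lemma D2_nonneg (hf : ∀ k, 0 ≤ f k) (j : ℕ) :
    2 * ∑ l ∈ Finset.Icc 1 (j - 1), cdfF f l * Dp f (j - l) ≤ Gp f j * Dp f j := by
  -- Step 1: rearrangement  ∑ F_l D_{j-l} ≤ ∑ F_l D_l
  have rearr : ∑ l ∈ Finset.Icc 1 (j - 1), cdfF f l * Dp f (j - l)
      ≤ ∑ l ∈ Finset.Icc 1 (j - 1), cdfF f l * Dp f l := by
    have refl1 : ∑ l ∈ Finset.Icc 1 (j - 1), cdfF f l * Dp f (j - l)
        = ∑ l ∈ Finset.Icc 1 (j - 1), cdfF f (j - l) * Dp f (j - (j - l)) := by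
      rw [sum_reflect j (fun l => cdfF f l * Dp f (j - l))]
    have refl1' : ∑ l ∈ Finset.Icc 1 (j - 1), cdfF f (j - l) * Dp f (j - (j - l))
        = ∑ l ∈ Finset.Icc 1 (j - 1), cdfF f (j - l) * Dp f l := by
      apply Finset.sum_congr rfl
      intro l hl
      simp only [Finset.mem_Icc] at hl
      congr 2
      omega
    have refl2 : ∑ l ∈ Finset.Icc 1 (j - 1), cdfF f (j - l) * Dp f (j - l)
        = ∑ l ∈ Finset.Icc 1 (j - 1), cdfF f l * Dp f l := by
      have := sum_reflect j (fun l => cdfF f l * Dp f l)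
      simpa using this
    -- 2 * LHS = ∑ (F_l D_{j-l} + F_{j-l} D_l) ≤ ∑ (F_l D_l + F_{j-l} D_{j-l}) = 2 * RHS
    have pair : ∀ l ∈ Finset.Icc 1 (j - 1),
        cdfF f l * Dp f (j - l) + cdfF f (j - l) * Dp f l
          ≤ cdfF f l * Dp f l + cdfF f (j - l) * Dp f (j - l) := by
      intro l hl
      simp only [Finset.mem_Icc] at hl
      rcases le_total l (j - l) with h | h
      · have hF := cdfF_mono hf h
        have hD := Dp_mono hf h
        nlinarith
      · have hF := cdfF_mono hf h
        have hD := Dp_mono hf h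
        nlinarith
    have hsum2 : ∑ l ∈ Finset.Icc 1 (j-1), (cdfF f l * Dp f (j - l) + cdfF f (j - l) * Dp f l)
        ≤ ∑ l ∈ Finset.Icc 1 (j-1), (cdfF f l * Dp f l + cdfF f (j - l) * Dp f (j - l)) :=
      Finset.sum_le_sum pair
    rw [Finset.sum_add_distrib, Finset.sum_add_distrib] at hsum2
    rw [refl2] at hsum2
    rw [refl1, refl1'] at *
    linarith [hsum2]
  -- Step 2: superadditivity  ∑ F_l (D_l + D_{j-l}) ≤ ∑ F_l D_j ≤ G_j D_j
  have super : ∑ l ∈ Finset.Icc 1 (j - 1), cdfF f l * (Dp f l + Dp f (j - l))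
      ≤ ∑ l ∈ Finset.Icc 1 (j - 1), cdfF f l * Dp f j := by
    apply Finset.sum_le_sum
    intro l hl
    simp only [Finset.mem_Icc] at hl
    have h1 := Dp_superadd hf l (j - l)
    have h2 : l + (j - l) = j := by omega
    rw [h2] at h1
    exact mul_le_mul_of_nonneg_left h1 (cdfF_nonneg hf l)
  have last : ∑ l ∈ Finset.Icc 1 (j - 1), cdfF f l * Dp f j ≤ Gp f j * Dp f j := by
    rw [← Finset.sum_mul]
    apply mul_le_mul_of_nonneg_right _ (Dp_nonneg' hf j)
    calc ∑ l ∈ Finset.Icc 1 (j - 1), cdfF f l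
        ≤ ∑ l ∈ Finset.Icc 1 j, cdfF f l :=
          Finset.sum_le_sum_of_subset_of_nonneg
            (Finset.Icc_subset_Icc le_rfl (by omega)) (fun l _ _ => cdfF_nonneg hf l)
      _ = Gp f j := rfl
  have expand : ∑ l ∈ Finset.Icc 1 (j - 1), cdfF f l * (Dp f l + Dp f (j - l))
      = (∑ l ∈ Finset.Icc 1 (j - 1), cdfF f l * Dp f l)
        + ∑ l ∈ Finset.Icc 1 (j - 1), cdfF f l * Dp f (j - l) := by
    rw [← Finset.sum_add_distrib]
    apply Finset.sum_congr rfl; intro l _; ring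
  linarith
end D2lemmas
/-- closed-form line process, as a function of time -/
def Rl (f : ℕ → ℝ) (γ : ℕ → ℕ → ℝ) (lam : ℝ) (j : ℕ) (t : ℝ) : ℝ :=
  ∑ i ∈ Finset.Icc 1 j, γ j i * Real.exp (-(lam * Gp f i) * t)

/-- first moment function `S_j(t) = ∑ G_i γ_{j,i} e^{-λ G_i t}` -/
def Sl (f : ℕ → ℝ) (γ : ℕ → ℕ → ℝ) (lam : ℝ) (j : ℕ) (t : ℝ) : ℝ :=
  ∑ i ∈ Finset.Icc 1 j, Gp f i * γ j i * Real.exp (-(lam * Gp f i) * t)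

/-- second moment function -/
def Ul (f : ℕ → ℝ) (γ : ℕ → ℕ → ℝ) (lam : ℝ) (j : ℕ) (t : ℝ) : ℝ :=
  ∑ i ∈ Finset.Icc 1 j, Gp f i * (Gp f i * γ j i) * Real.exp (-(lam * Gp f i) * t)

section Glemmas

variable {m : ℕ} {f : ℕ → ℝ} {lam : ℝ} {γ : ℕ → ℕ → ℝ}

lemma cdfF_eq_zero_of (hf : ∀ k, 0 ≤ f k) {j l : ℕ} (hl : l ≤ j) (h : cdfF f j = 0) :
    cdfF f l = 0 :=
  le_antisymm (h ▸ cdfF_mono hf hl) (cdfF_nonneg hf l)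

lemma Gp_eq_zero_of (hf : ∀ k, 0 ≤ f k) {j i : ℕ} (hi : i ≤ j) (h : cdfF f j = 0) :
    Gp f i = 0 := by
  apply Finset.sum_eq_zero
  intro l hl
  simp only [Finset.mem_Icc] at hl
  exact cdfF_eq_zero_of hf (by omega) h

lemma Gp_split (i j : ℕ) (hij : i ≤ j) :
    Gp f j = Gp f i + ∑ k ∈ Finset.Icc (i + 1) j, cdfF f k := by
  induction j, hij using Nat.le_induction with
  | base => simp [Finset.Icc_eq_empty_of_lt (by omega : i < i + 1)]
  | succ n hn ih =>
      rw [Gp_succ, ih, Finset.sum_Icc_succ_top (by omega : i + 1 ≤ n + 1)]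
      ring

/-- row sums: `∑_{i=1}^{j} γ_{j,i} = j` -/
lemma row_sum (hf : ∀ k, 0 ≤ f k)
    (hγ_zero : ∀ n j : ℕ, cdfF f n = 0 → 1 ≤ j → j ≤ n → γ n j = 1)
    (hγ_diag : ∀ n : ℕ, 0 < cdfF f n →
      γ n n = (n : ℝ) - ∑ i ∈ Finset.Icc 1 (n - 1), γ n i)
    (j : ℕ) : ∑ i ∈ Finset.Icc 1 j, γ j i = (j : ℝ) := by
  rcases Nat.eq_zero_or_pos j with rfl | hj
  · simp
  rcases (cdfF_nonneg hf j).lt_or_eq with hpos | hzero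
  · have hsplit : j = (j - 1) + 1 := by omega
    rw [hsplit, Finset.sum_Icc_succ_top (by omega : 1 ≤ (j-1)+1)]
    rw [← hsplit, hγ_diag j hpos]
    ring
  · rw [Finset.sum_congr rfl (fun i hi => by
      simp only [Finset.mem_Icc] at hi
      exact hγ_zero j i hzero.symm hi.1 hi.2)]
    simp

/-- the key coefficient identity -/
lemma gamma_ident (hf : ∀ k, 0 ≤ f k)
    (hγ_zero : ∀ n j : ℕ, cdfF f n = 0 → 1 ≤ j → j ≤ n → γ n j = 1)
    (hγ_rec : ∀ n i : ℕ, 0 < cdfF f n → 1 ≤ i → i < n →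
      γ n i = 2 * (∑ j ∈ Finset.Icc 1 (n - i), cdfF f j * γ (n - j) i) /
        (∑ k ∈ Finset.Icc (i + 1) n, cdfF f k))
    {j i : ℕ} (h1 : 1 ≤ i) (hij : i ≤ j) :
    (Gp f j - Gp f i) * γ j i
      = 2 * ∑ l ∈ Finset.Icc 1 (j - i), cdfF f l * γ (j - l) i := by
  rcases eq_or_lt_of_le hij with rfl | hlt
  · simp
  rcases (cdfF_nonneg hf j).lt_or_eq with hpos | hzero
  · have hden : ∑ k ∈ Finset.Icc (i + 1) j, cdfF f k = Gp f j - Gp f i := by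
      have := Gp_split (f := f) i j hij
      linarith
    have hdenpos : 0 < ∑ k ∈ Finset.Icc (i + 1) j, cdfF f k := by
      apply Finset.sum_pos' (fun k _ => cdfF_nonneg hf k)
      exact ⟨j, by simp [Finset.mem_Icc]; omega, hpos⟩
    rw [hγ_rec j i hpos h1 hlt, hden]
    have hne : Gp f j - Gp f i ≠ 0 := by rw [← hden]; exact ne_of_gt hdenpos
    field_simp
  · -- all cdfF values vanish up to j, so both sides are 0
    have hGj : Gp f j = 0 := Gp_eq_zero_of hf le_rfl hzero.symm
    have hGi : Gp f i = 0 := Gp_eq_zero_of hf hij hzero.symm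
    rw [hGj, hGi]
    have : ∑ l ∈ Finset.Icc 1 (j - i), cdfF f l * γ (j - l) i = 0 := by
      apply Finset.sum_eq_zero
      intro l hl
      simp only [Finset.mem_Icc] at hl
      rw [cdfF_eq_zero_of hf (by omega : l ≤ j) hzero.symm]
      ring
    rw [this]
    ring

/-- double sum swap -/
lemma swapA (j : ℕ) (g : ℕ → ℕ → ℝ) :
    ∑ i ∈ Finset.Icc 1 j, ∑ l ∈ Finset.Icc 1 (j - i), g i l
      = ∑ l ∈ Finset.Icc 1 (j - 1), ∑ i ∈ Finset.Icc 1 (j - l), g i l := by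
  apply Finset.sum_comm'
  intro i l
  simp only [Finset.mem_Icc]
  omega

lemma Rl_zero_eq (hf : ∀ k, 0 ≤ f k)
    (hγ_zero : ∀ n j : ℕ, cdfF f n = 0 → 1 ≤ j → j ≤ n → γ n j = 1)
    (hγ_diag : ∀ n : ℕ, 0 < cdfF f n →
      γ n n = (n : ℝ) - ∑ i ∈ Finset.Icc 1 (n - 1), γ n i)
    (j : ℕ) : Rl f γ lam j 0 = (j : ℝ) := by
  unfold Rl
  simp only [mul_zero, Real.exp_zero, mul_one]
  exact row_sum hf hγ_zero hγ_diag j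

/-- S in terms of R (coefficient identity summed) -/
lemma Sid (hf : ∀ k, 0 ≤ f k)
    (hγ_zero : ∀ n j : ℕ, cdfF f n = 0 → 1 ≤ j → j ≤ n → γ n j = 1)
    (hγ_rec : ∀ n i : ℕ, 0 < cdfF f n → 1 ≤ i → i < n →
      γ n i = 2 * (∑ j ∈ Finset.Icc 1 (n - i), cdfF f j * γ (n - j) i) /
        (∑ k ∈ Finset.Icc (i + 1) n, cdfF f k))
    (j : ℕ) (t : ℝ) :
    Sl f γ lam j t
      = Gp f j * Rl f γ lam j t
        - 2 * ∑ l ∈ Finset.Icc 1 (j - 1), cdfF f l * Rl f γ lam (j - l) t := by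
  have key : Gp f j * Rl f γ lam j t - Sl f γ lam j t
      = 2 * ∑ l ∈ Finset.Icc 1 (j - 1), cdfF f l * Rl f γ lam (j - l) t := by
    unfold Rl Sl
    rw [Finset.mul_sum, ← Finset.sum_sub_distrib]
    have step : ∀ i ∈ Finset.Icc 1 j,
        Gp f j * (γ j i * Real.exp (-(lam * Gp f i) * t))
          - Gp f i * γ j i * Real.exp (-(lam * Gp f i) * t)
        = ∑ l ∈ Finset.Icc 1 (j - i),
            2 * (cdfF f l * (γ (j - l) i * Real.exp (-(lam * Gp f i) * t))) := by
      intro i hi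
      simp only [Finset.mem_Icc] at hi
      have h := gamma_ident hf hγ_zero hγ_rec hi.1 hi.2
      have expand : Gp f j * (γ j i * Real.exp (-(lam * Gp f i) * t))
          - Gp f i * γ j i * Real.exp (-(lam * Gp f i) * t)
          = ((Gp f j - Gp f i) * γ j i) * Real.exp (-(lam * Gp f i) * t) := by ring
      rw [expand, h]
      simp only [Finset.mul_sum, Finset.sum_mul]
      apply Finset.sum_congr rfl
      intro l _
      ring
    rw [Finset.sum_congr rfl step]
    rw [swapA j (fun i l => 2 * (cdfF f l * (γ (j - l) i * Real.exp (-(lam * Gp f i) * t))))]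
    rw [Finset.mul_sum]
    apply Finset.sum_congr rfl
    intro l _
    simp only [Rl, Sl, Finset.mul_sum]
    try (apply Finset.sum_congr rfl
         intro i _
         ring)
  linarith

/-- U in terms of S -/
lemma Uid (hf : ∀ k, 0 ≤ f k)
    (hγ_zero : ∀ n j : ℕ, cdfF f n = 0 → 1 ≤ j → j ≤ n → γ n j = 1)
    (hγ_rec : ∀ n i : ℕ, 0 < cdfF f n → 1 ≤ i → i < n →
      γ n i = 2 * (∑ j ∈ Finset.Icc 1 (n - i), cdfF f j * γ (n - j) i) /
        (∑ k ∈ Finset.Icc (i + 1) n, cdfF f k))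
    (j : ℕ) (t : ℝ) :
    Ul f γ lam j t
      = Gp f j * Sl f γ lam j t
        - 2 * ∑ l ∈ Finset.Icc 1 (j - 1), cdfF f l * Sl f γ lam (j - l) t := by
  have key : Gp f j * Sl f γ lam j t - Ul f γ lam j t
      = 2 * ∑ l ∈ Finset.Icc 1 (j - 1), cdfF f l * Sl f γ lam (j - l) t := by
    unfold Sl Ul
    rw [Finset.mul_sum, ← Finset.sum_sub_distrib]
    have step : ∀ i ∈ Finset.Icc 1 j,
        Gp f j * (Gp f i * γ j i * Real.exp (-(lam * Gp f i) * t))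
          - Gp f i * (Gp f i * γ j i) * Real.exp (-(lam * Gp f i) * t)
        = ∑ l ∈ Finset.Icc 1 (j - i),
            2 * (cdfF f l * (Gp f i * γ (j - l) i * Real.exp (-(lam * Gp f i) * t))) := by
      intro i hi
      simp only [Finset.mem_Icc] at hi
      have h := gamma_ident hf hγ_zero hγ_rec hi.1 hi.2
      have expand : Gp f j * (Gp f i * γ j i * Real.exp (-(lam * Gp f i) * t))
          - Gp f i * (Gp f i * γ j i) * Real.exp (-(lam * Gp f i) * t)
          = ((Gp f j - Gp f i) * γ j i) * (Gp f i * Real.exp (-(lam * Gp f i) * t)) := by ring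
      rw [expand, h]
      simp only [Finset.mul_sum, Finset.sum_mul]
      apply Finset.sum_congr rfl
      intro l _
      ring
    rw [Finset.sum_congr rfl step]
    rw [swapA j (fun i l => 2 * (cdfF f l * (Gp f i * γ (j - l) i * Real.exp (-(lam * Gp f i) * t))))]
    rw [Finset.mul_sum]
    apply Finset.sum_congr rfl
    intro l _
    simp only [Rl, Sl, Finset.mul_sum]
    try (apply Finset.sum_congr rfl
         intro i _
         ring)
  linarith

lemma Sl_zero_eq (hf : ∀ k, 0 ≤ f k)
    (hγ_zero : ∀ n j : ℕ, cdfF f n = 0 → 1 ≤ j → j ≤ n → γ n j = 1)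
    (hγ_rec : ∀ n i : ℕ, 0 < cdfF f n → 1 ≤ i → i < n →
      γ n i = 2 * (∑ j ∈ Finset.Icc 1 (n - i), cdfF f j * γ (n - j) i) /
        (∑ k ∈ Finset.Icc (i + 1) n, cdfF f k))
    (hγ_diag : ∀ n : ℕ, 0 < cdfF f n →
      γ n n = (n : ℝ) - ∑ i ∈ Finset.Icc 1 (n - 1), γ n i)
    (j : ℕ) : Sl f γ lam j 0 = Dp f j := by
  rcases Nat.eq_zero_or_pos j with rfl | hj
  · simp [Sl, Dp, Gp_zero]
  rw [Sid hf hγ_zero hγ_rec j 0, Rl_zero_eq hf hγ_zero hγ_diag j]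
  have hterm : ∀ l ∈ Finset.Icc 1 (j - 1),
      cdfF f l * Rl f γ lam (j - l) 0 = cdfF f l * ((j : ℝ) - l) := by
    intro l hl
    simp only [Finset.mem_Icc] at hl
    rw [Rl_zero_eq hf hγ_zero hγ_diag (j - l)]
    congr 1
    push_cast [Nat.cast_sub (by omega : l ≤ j)]
    ring
  rw [Finset.sum_congr rfl hterm]
  have hlin := sum_cdfF_lin (f := f) (j - 1)
  have hcast : ((j - 1 : ℕ) : ℝ) + 1 = (j : ℝ) := by
    push_cast [Nat.cast_sub (by omega : 1 ≤ j)]; ring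
  rw [hcast] at hlin
  rw [hlin, Dp]
  ring
end Glemmas
section Analytic

variable {m : ℕ} {f : ℕ → ℝ} {lam : ℝ} {γ : ℕ → ℕ → ℝ}

lemma hasDerivAt_expsum (s : Finset ℕ) (c a : ℕ → ℝ) (t : ℝ) :
    HasDerivAt (fun u => ∑ i ∈ s, c i * Real.exp (a i * u))
      (∑ i ∈ s, c i * (a i * Real.exp (a i * t))) t := by
  apply HasDerivAt.fun_sum
  intro i _
  have h := (((hasDerivAt_id t).const_mul (a i)).exp).const_mul (c i)
  simp only [id_eq, mul_one] at h
  exact h.congr_deriv (by ring)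

lemma hasDerivAt_Rl (j : ℕ) (t : ℝ) :
    HasDerivAt (fun u => Rl f γ lam j u) (-lam * Sl f γ lam j t) t := by
  have h := hasDerivAt_expsum (Finset.Icc 1 j) (fun i => γ j i) (fun i => -(lam * Gp f i)) t
  have heq : (∑ i ∈ Finset.Icc 1 j, γ j i * (-(lam * Gp f i) * Real.exp (-(lam * Gp f i) * t)))
      = -lam * Sl f γ lam j t := by
    unfold Sl
    rw [Finset.mul_sum]
    apply Finset.sum_congr rfl
    intro i _
    ring
  rw [heq] at h
  exact h

lemma hasDerivAt_Sl (j : ℕ) (t : ℝ) :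
    HasDerivAt (fun u => Sl f γ lam j u) (-lam * Ul f γ lam j t) t := by
  have h := hasDerivAt_expsum (Finset.Icc 1 j) (fun i => Gp f i * γ j i)
    (fun i => -(lam * Gp f i)) t
  have heq : (∑ i ∈ Finset.Icc 1 j, Gp f i * γ j i * (-(lam * Gp f i) * Real.exp (-(lam * Gp f i) * t)))
      = -lam * Ul f γ lam j t := by
    unfold Ul
    rw [Finset.mul_sum]
    apply Finset.sum_congr rfl
    intro i _
    ring
  rw [heq] at h
  exact h

lemma hasDerivAt_exp_mul (b : ℝ) {g : ℝ → ℝ} {g' : ℝ → ℝ}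
    (hg : ∀ u, HasDerivAt g (g' u) u) (u : ℝ) :
    HasDerivAt (fun v => Real.exp (b * v) * g v)
      (Real.exp (b * u) * (b * g u + g' u)) u := by
  have h1 := ((hasDerivAt_id u).const_mul b).exp
  have h2 := h1.fun_mul (hg u)
  simp only [id_eq, mul_one] at h2
  exact h2.congr_deriv (by ring)

/-- the workhorse: monotone from nonneg derivative on `[0,∞)` -/
lemma ge_of_deriv {g g' : ℝ → ℝ} (hd : ∀ t, HasDerivAt g (g' t) t)
    (h' : ∀ t, 0 ≤ t → 0 ≤ g' t) {t : ℝ} (ht : 0 ≤ t) : g 0 ≤ g t := by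
  have cont : ContinuousOn g (Set.Ici (0:ℝ)) :=
    fun x _ => ((hd x).differentiableAt.continuousAt.continuousWithinAt)
  have mono := monotoneOn_of_deriv_nonneg (convex_Ici (0:ℝ)) cont
    (fun x hx => (hd x).differentiableAt.differentiableWithinAt)
    (fun x hx => by
      rw [(hd x).deriv]
      rw [interior_Ici] at hx
      exact h' x (le_of_lt hx))
  exact mono Set.self_mem_Ici (Set.mem_Ici.mpr ht) ht

/-- P1 : `R_j(t) ≥ 0` for `t ≥ 0` -/
lemma Rl_nonneg (hf : ∀ k, 0 ≤ f k) (hlam : 0 < lam)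
    (hγ_zero : ∀ n j : ℕ, cdfF f n = 0 → 1 ≤ j → j ≤ n → γ n j = 1)
    (hγ_rec : ∀ n i : ℕ, 0 < cdfF f n → 1 ≤ i → i < n →
      γ n i = 2 * (∑ j ∈ Finset.Icc 1 (n - i), cdfF f j * γ (n - j) i) /
        (∑ k ∈ Finset.Icc (i + 1) n, cdfF f k))
    (hγ_diag : ∀ n : ℕ, 0 < cdfF f n →
      γ n n = (n : ℝ) - ∑ i ∈ Finset.Icc 1 (n - 1), γ n i) :
    ∀ j, ∀ t : ℝ, 0 ≤ t → 0 ≤ Rl f γ lam j t := by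
  intro j
  induction j using Nat.strong_induction_on with
  | _ j ih =>
    intro t ht
    set b := lam * Gp f j with hb
    have hd : ∀ u, HasDerivAt (fun v => Real.exp (b * v) * Rl f γ lam j v)
        (Real.exp (b * u) * (b * Rl f γ lam j u + (-lam * Sl f γ lam j u))) u :=
      fun u => hasDerivAt_exp_mul b (fun u => hasDerivAt_Rl j u) u
    have hpos : ∀ u : ℝ, 0 ≤ u →
        0 ≤ Real.exp (b * u) * (b * Rl f γ lam j u + (-lam * Sl f γ lam j u)) := by
      intro u hu
      apply mul_nonneg (Real.exp_nonneg _)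
      have hS := Sid (lam := lam) hf hγ_zero hγ_rec j u
      have key : b * Rl f γ lam j u + (-lam * Sl f γ lam j u)
          = lam * (2 * ∑ l ∈ Finset.Icc 1 (j - 1), cdfF f l * Rl f γ lam (j - l) u) := by
        rw [hS, hb]; ring
      rw [key]
      apply mul_nonneg hlam.le
      apply mul_nonneg (by norm_num)
      apply Finset.sum_nonneg
      intro l hl
      simp only [Finset.mem_Icc] at hl
      exact mul_nonneg (cdfF_nonneg hf l) (ih (j - l) (by omega) u hu)
    have := ge_of_deriv hd hpos ht
    have h0 : Real.exp (b * 0) * Rl f γ lam j 0 = (j : ℝ) := by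
      simp [Rl_zero_eq hf hγ_zero hγ_diag j]
    rw [h0] at this
    have hexp : 0 < Real.exp (b * t) := Real.exp_pos _
    nlinarith [Nat.cast_nonneg (α := ℝ) j]

/-- P2 : `R_j(t) ≤ j` for `t ≥ 0` -/
lemma Rl_le (hf : ∀ k, 0 ≤ f k) (hlam : 0 < lam)
    (hγ_zero : ∀ n j : ℕ, cdfF f n = 0 → 1 ≤ j → j ≤ n → γ n j = 1)
    (hγ_rec : ∀ n i : ℕ, 0 < cdfF f n → 1 ≤ i → i < n →
      γ n i = 2 * (∑ j ∈ Finset.Icc 1 (n - i), cdfF f j * γ (n - j) i) /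
        (∑ k ∈ Finset.Icc (i + 1) n, cdfF f k))
    (hγ_diag : ∀ n : ℕ, 0 < cdfF f n →
      γ n n = (n : ℝ) - ∑ i ∈ Finset.Icc 1 (n - 1), γ n i) :
    ∀ j, ∀ t : ℝ, 0 ≤ t → Rl f γ lam j t ≤ (j : ℝ) := by
  intro j
  induction j using Nat.strong_induction_on with
  | _ j ih =>
    intro t ht
    set b := lam * Gp f j with hb
    have hd : ∀ u, HasDerivAt (fun v => Real.exp (b * v) * ((j : ℝ) - Rl f γ lam j v))
        (Real.exp (b * u) * (b * ((j : ℝ) - Rl f γ lam j u) + (lam * Sl f γ lam j u))) u := by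
      intro u
      have hder : ∀ v, HasDerivAt (fun w => (j : ℝ) - Rl f γ lam j w)
          (lam * Sl f γ lam j v) v := by
        intro v
        have := (hasDerivAt_Rl (f := f) (γ := γ) (lam := lam) j v).const_sub (j : ℝ)
        exact this.congr_deriv (by ring)
      exact hasDerivAt_exp_mul b hder u
    have hpos : ∀ u : ℝ, 0 ≤ u →
        0 ≤ Real.exp (b * u) * (b * ((j:ℝ) - Rl f γ lam j u) + (lam * Sl f γ lam j u)) := by
      intro u hu
      apply mul_nonneg (Real.exp_nonneg _)
      have hS := Sid (lam := lam) hf hγ_zero hγ_rec j u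
      have key : b * ((j:ℝ) - Rl f γ lam j u) + (lam * Sl f γ lam j u)
          = lam * (Gp f j * (j:ℝ)
              - 2 * ∑ l ∈ Finset.Icc 1 (j - 1), cdfF f l * Rl f γ lam (j - l) u) := by
        rw [hS, hb]; ring
      rw [key]
      apply mul_nonneg hlam.le
      have hsum_le : ∑ l ∈ Finset.Icc 1 (j - 1), cdfF f l * Rl f γ lam (j - l) u
          ≤ ∑ l ∈ Finset.Icc 1 (j - 1), cdfF f l * ((j : ℝ) - l) := by
        apply Finset.sum_le_sum
        intro l hl
        simp only [Finset.mem_Icc] at hl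
        have h1 := ih (j - l) (by omega) u hu
        have hcast : ((j - l : ℕ) : ℝ) = (j : ℝ) - l := by
          push_cast [Nat.cast_sub (by omega : l ≤ j)]; ring
        rw [hcast] at h1
        exact mul_le_mul_of_nonneg_left h1 (cdfF_nonneg hf l)
      have hlin := sum_cdfF_lin (f := f) (j - 1)
      rcases Nat.eq_zero_or_pos j with rfl | hj
      · simp [Gp_zero]
      have hcast : ((j - 1 : ℕ) : ℝ) + 1 = (j : ℝ) := by
        push_cast [Nat.cast_sub (by omega : 1 ≤ j)]; ring
      rw [hcast] at hlin
      have hD := Dp_nonneg' hf j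
      simp only [Dp] at hD
      rw [hlin] at hsum_le
      linarith
    have := ge_of_deriv hd hpos ht
    have h0 : Real.exp (b * 0) * ((j:ℝ) - Rl f γ lam j 0) = 0 := by
      simp [Rl_zero_eq hf hγ_zero hγ_diag j]
    rw [h0] at this
    have hexp : 0 < Real.exp (b * t) := Real.exp_pos _
    nlinarith

/-- P4 : `S_j(t) ≥ 0` for `t ≥ 0` -/
lemma Sl_nonneg (hf : ∀ k, 0 ≤ f k) (hlam : 0 < lam)
    (hγ_zero : ∀ n j : ℕ, cdfF f n = 0 → 1 ≤ j → j ≤ n → γ n j = 1)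
    (hγ_rec : ∀ n i : ℕ, 0 < cdfF f n → 1 ≤ i → i < n →
      γ n i = 2 * (∑ j ∈ Finset.Icc 1 (n - i), cdfF f j * γ (n - j) i) /
        (∑ k ∈ Finset.Icc (i + 1) n, cdfF f k))
    (hγ_diag : ∀ n : ℕ, 0 < cdfF f n →
      γ n n = (n : ℝ) - ∑ i ∈ Finset.Icc 1 (n - 1), γ n i) :
    ∀ j, ∀ t : ℝ, 0 ≤ t → 0 ≤ Sl f γ lam j t := by
  intro j
  induction j using Nat.strong_induction_on with
  | _ j ih =>
    intro t ht
    set b := lam * Gp f j with hb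
    have hd : ∀ u, HasDerivAt (fun v => Real.exp (b * v) * Sl f γ lam j v)
        (Real.exp (b * u) * (b * Sl f γ lam j u + (-lam * Ul f γ lam j u))) u :=
      fun u => hasDerivAt_exp_mul b (fun u => hasDerivAt_Sl j u) u
    have hpos : ∀ u : ℝ, 0 ≤ u →
        0 ≤ Real.exp (b * u) * (b * Sl f γ lam j u + (-lam * Ul f γ lam j u)) := by
      intro u hu
      apply mul_nonneg (Real.exp_nonneg _)
      have hU := Uid (lam := lam) hf hγ_zero hγ_rec j u
      have key : b * Sl f γ lam j u + (-lam * Ul f γ lam j u)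
          = lam * (2 * ∑ l ∈ Finset.Icc 1 (j - 1), cdfF f l * Sl f γ lam (j - l) u) := by
        rw [hU, hb]; ring
      rw [key]
      apply mul_nonneg hlam.le
      apply mul_nonneg (by norm_num)
      apply Finset.sum_nonneg
      intro l hl
      simp only [Finset.mem_Icc] at hl
      exact mul_nonneg (cdfF_nonneg hf l) (ih (j - l) (by omega) u hu)
    have := ge_of_deriv hd hpos ht
    have h0 : Real.exp (b * 0) * Sl f γ lam j 0 = Dp f j := by
      simp [Sl_zero_eq hf hγ_zero hγ_rec hγ_diag j]
    rw [h0] at this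
    have hexp : 0 < Real.exp (b * t) := Real.exp_pos _
    nlinarith [Dp_nonneg' hf j]

/-- P5 : `S_j(t) ≤ D_j` for `t ≥ 0` -/
lemma Sl_le (hf : ∀ k, 0 ≤ f k) (hlam : 0 < lam)
    (hγ_zero : ∀ n j : ℕ, cdfF f n = 0 → 1 ≤ j → j ≤ n → γ n j = 1)
    (hγ_rec : ∀ n i : ℕ, 0 < cdfF f n → 1 ≤ i → i < n →
      γ n i = 2 * (∑ j ∈ Finset.Icc 1 (n - i), cdfF f j * γ (n - j) i) /
        (∑ k ∈ Finset.Icc (i + 1) n, cdfF f k))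
    (hγ_diag : ∀ n : ℕ, 0 < cdfF f n →
      γ n n = (n : ℝ) - ∑ i ∈ Finset.Icc 1 (n - 1), γ n i) :
    ∀ j, ∀ t : ℝ, 0 ≤ t → Sl f γ lam j t ≤ Dp f j := by
  intro j
  induction j using Nat.strong_induction_on with
  | _ j ih =>
    intro t ht
    set b := lam * Gp f j with hb
    have hd : ∀ u, HasDerivAt (fun v => Real.exp (b * v) * (Dp f j - Sl f γ lam j v))
        (Real.exp (b * u) * (b * (Dp f j - Sl f γ lam j u) + (lam * Ul f γ lam j u))) u := by
      intro u
      have hder : ∀ v, HasDerivAt (fun w => Dp f j - Sl f γ lam j w)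
          (lam * Ul f γ lam j v) v := by
        intro v
        have := (hasDerivAt_Sl (f := f) (γ := γ) (lam := lam) j v).const_sub (Dp f j)
        exact this.congr_deriv (by ring)
      exact hasDerivAt_exp_mul b hder u
    have hpos : ∀ u : ℝ, 0 ≤ u →
        0 ≤ Real.exp (b * u) * (b * (Dp f j - Sl f γ lam j u) + (lam * Ul f γ lam j u)) := by
      intro u hu
      apply mul_nonneg (Real.exp_nonneg _)
      have hU := Uid (lam := lam) hf hγ_zero hγ_rec j u
      have key : b * (Dp f j - Sl f γ lam j u) + (lam * Ul f γ lam j u)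
          = lam * (Gp f j * Dp f j
              - 2 * ∑ l ∈ Finset.Icc 1 (j - 1), cdfF f l * Sl f γ lam (j - l) u) := by
        rw [hU, hb]; ring
      rw [key]
      apply mul_nonneg hlam.le
      have hsum_le : ∑ l ∈ Finset.Icc 1 (j - 1), cdfF f l * Sl f γ lam (j - l) u
          ≤ ∑ l ∈ Finset.Icc 1 (j - 1), cdfF f l * Dp f (j - l) := by
        apply Finset.sum_le_sum
        intro l hl
        simp only [Finset.mem_Icc] at hl
        exact mul_le_mul_of_nonneg_left (ih (j - l) (by omega) u hu) (cdfF_nonneg hf l)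
      have := D2_nonneg (f := f) hf j
      linarith
    have := ge_of_deriv hd hpos ht
    have h0 : Real.exp (b * 0) * (Dp f j - Sl f γ lam j 0) = 0 := by
      simp [Sl_zero_eq hf hγ_zero hγ_rec hγ_diag j]
    rw [h0] at this
    have hexp : 0 < Real.exp (b * t) := Real.exp_pos _
    nlinarith

end Analytic
section Increment

variable {m : ℕ} {f : ℕ → ℝ} {lam : ℝ} {γ : ℕ → ℕ → ℝ}

/-- telescoping identity:
`∑_{l≤j} F(l)R_{j+1-l} - ∑_{l≤j-1} F(l)R_{j-l} = ∑_{l≤j} f(l)R_{j+1-l}` -/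
lemma TSid (hf : ∀ k, 0 ≤ f k) (j : ℕ) (g : ℕ → ℝ) :
    ∑ l ∈ Finset.Icc 1 j, cdfF f l * g (j + 1 - l)
      - ∑ l ∈ Finset.Icc 1 (j - 1), cdfF f l * g (j - l)
      = ∑ l ∈ Finset.Icc 1 j, f l * g (j + 1 - l) := by
  have hsplit : ∀ l ∈ Finset.Icc 1 j, cdfF f l * g (j + 1 - l)
      = cdfF f (l - 1) * g (j + 1 - l) + f l * g (j + 1 - l) := by
    intro l hl
    simp only [Finset.mem_Icc] at hl
    have : cdfF f l = cdfF f (l - 1) + f l := by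
      have := cdfF_succ (f := f) (l - 1)
      rw [show l - 1 + 1 = l from by omega] at this
      exact this
    rw [this]; ring
  rw [Finset.sum_congr rfl hsplit, Finset.sum_add_distrib]
  have hre : ∑ l ∈ Finset.Icc 1 j, cdfF f (l - 1) * g (j + 1 - l)
      = ∑ l ∈ Finset.Icc 0 (j - 1), cdfF f l * g (j - l) := by
    rcases Nat.eq_zero_or_pos j with rfl | hj
    · simp [cdfF_zero]
    apply Finset.sum_nbij' (fun l => l - 1) (fun l => l + 1)
    all_goals intro a ha
    all_goals simp only [Finset.mem_Icc] at ha ⊢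
    any_goals omega
    congr 2
    omega
  have hzero : ∑ l ∈ Finset.Icc 0 (j - 1), cdfF f l * g (j - l)
      = ∑ l ∈ Finset.Icc 1 (j - 1), cdfF f l * g (j - l) := by
    rcases Nat.eq_zero_or_pos j with rfl | hj
    · simp [cdfF_zero]
    have hins : Finset.Icc 0 (j - 1) = insert 0 (Finset.Icc 1 (j - 1)) := by
      ext x; simp only [Finset.mem_Icc, Finset.mem_insert]; omega
    rw [hins, Finset.sum_insert (by simp)]
    simp [cdfF_zero]
  rw [hre, hzero]
  ring

/-- P3 : one-step increments of `R` are at most 2 -/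
lemma Rl_inc_le (hf : ∀ k, 0 ≤ f k) (hm : 1 ≤ m) (hlam : 0 < lam)
    (hsum : ∑ k ∈ Finset.Icc 1 m, f k = 1)
    (hsupp : ∀ k : ℕ, k = 0 ∨ m < k → f k = 0)
    (hγ_zero : ∀ n j : ℕ, cdfF f n = 0 → 1 ≤ j → j ≤ n → γ n j = 1)
    (hγ_rec : ∀ n i : ℕ, 0 < cdfF f n → 1 ≤ i → i < n →
      γ n i = 2 * (∑ j ∈ Finset.Icc 1 (n - i), cdfF f j * γ (n - j) i) /
        (∑ k ∈ Finset.Icc (i + 1) n, cdfF f k))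
    (hγ_diag : ∀ n : ℕ, 0 < cdfF f n →
      γ n n = (n : ℝ) - ∑ i ∈ Finset.Icc 1 (n - 1), γ n i)
    (j : ℕ) {t : ℝ} (ht : 0 ≤ t) :
    Rl f γ lam (j + 1) t - Rl f γ lam j t ≤ 2 := by
  set b := lam * Gp f j with hb
  have hd : ∀ u, HasDerivAt
      (fun v => Real.exp (b * v) * (2 - Rl f γ lam (j + 1) v + Rl f γ lam j v))
      (Real.exp (b * u) * (b * (2 - Rl f γ lam (j + 1) u + Rl f γ lam j u)
        + (lam * Sl f γ lam (j + 1) u - lam * Sl f γ lam j u))) u := by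
    intro u
    have hder : ∀ v, HasDerivAt (fun w => 2 - Rl f γ lam (j + 1) w + Rl f γ lam j w)
        (lam * Sl f γ lam (j + 1) v - lam * Sl f γ lam j v) v := by
      intro v
      have h1 := (hasDerivAt_Rl (f := f) (γ := γ) (lam := lam) (j + 1) v).const_sub (2 : ℝ)
      have h2 := h1.fun_add (hasDerivAt_Rl (f := f) (γ := γ) (lam := lam) j v)
      exact h2.congr_deriv (by ring)
    exact hasDerivAt_exp_mul b hder u
  have hpos : ∀ u : ℝ, 0 ≤ u →
      0 ≤ Real.exp (b * u) * (b * (2 - Rl f γ lam (j + 1) u + Rl f γ lam j u)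
        + (lam * Sl f γ lam (j + 1) u - lam * Sl f γ lam j u)) := by
    intro u hu
    apply mul_nonneg (Real.exp_nonneg _)
    have hS1 := Sid (lam := lam) hf hγ_zero hγ_rec (j + 1) u
    have hS0 := Sid (lam := lam) hf hγ_zero hγ_rec j u
    rw [show j + 1 - 1 = j from by omega] at hS1
    -- bracket = lam * (2 G_j + F(j+1) R_{j+1} - 2 ∑_{l≤j} f(l) R_{j+1-l})
    have hTS := TSid (f := f) hf j (fun i => Rl f γ lam i u)
    have key : b * (2 - Rl f γ lam (j + 1) u + Rl f γ lam j u)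
        + (lam * Sl f γ lam (j + 1) u - lam * Sl f γ lam j u)
        = lam * (2 * Gp f j + cdfF f (j + 1) * Rl f γ lam (j + 1) u
            - 2 * ∑ l ∈ Finset.Icc 1 j, f l * Rl f γ lam (j + 1 - l) u) := by
      rw [hS1, hS0, hb, Gp_succ]
      nlinarith [hTS]
    rw [key]
    apply mul_nonneg hlam.le
    have h1 : 0 ≤ cdfF f (j + 1) * Rl f γ lam (j + 1) u :=
      mul_nonneg (cdfF_nonneg hf (j + 1))
        (Rl_nonneg hf hlam hγ_zero hγ_rec hγ_diag (j + 1) u hu)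
    have h2 : ∑ l ∈ Finset.Icc 1 j, f l * Rl f γ lam (j + 1 - l) u ≤ Gp f j := by
      have hle : ∑ l ∈ Finset.Icc 1 j, f l * Rl f γ lam (j + 1 - l) u
          ≤ ∑ l ∈ Finset.Icc 1 j, f l * ((j : ℝ) + 1 - l) := by
        apply Finset.sum_le_sum
        intro l hl
        simp only [Finset.mem_Icc] at hl
        have := Rl_le hf hlam hγ_zero hγ_rec hγ_diag (j + 1 - l) u hu
        have hcast : ((j + 1 - l : ℕ) : ℝ) = (j : ℝ) + 1 - l := by
          push_cast [Nat.cast_sub (by omega : l ≤ j + 1)]; ring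
        rw [hcast] at this
        exact mul_le_mul_of_nonneg_left this (hf l)
      rw [sum_f_lin j] at hle
      exact hle
    linarith
  have hmono := ge_of_deriv (hd) hpos ht
  have h0 : Real.exp (b * 0) * (2 - Rl f γ lam (j + 1) 0 + Rl f γ lam j 0) = 1 := by
    rw [Rl_zero_eq hf hγ_zero hγ_diag (j + 1), Rl_zero_eq hf hγ_zero hγ_diag j]
    push_cast
    simp
    ring
  rw [h0] at hmono
  have hexp : 0 < Real.exp (b * t) := Real.exp_pos _
  nlinarith

/-- chained increment bound: `R_b - R_a ≤ 2 (b - a)` for `a ≤ b` -/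
lemma Rl_chain (hf : ∀ k, 0 ≤ f k) (hm : 1 ≤ m) (hlam : 0 < lam)
    (hsum : ∑ k ∈ Finset.Icc 1 m, f k = 1)
    (hsupp : ∀ k : ℕ, k = 0 ∨ m < k → f k = 0)
    (hγ_zero : ∀ n j : ℕ, cdfF f n = 0 → 1 ≤ j → j ≤ n → γ n j = 1)
    (hγ_rec : ∀ n i : ℕ, 0 < cdfF f n → 1 ≤ i → i < n →
      γ n i = 2 * (∑ j ∈ Finset.Icc 1 (n - i), cdfF f j * γ (n - j) i) /
        (∑ k ∈ Finset.Icc (i + 1) n, cdfF f k))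
    (hγ_diag : ∀ n : ℕ, 0 < cdfF f n →
      γ n n = (n : ℝ) - ∑ i ∈ Finset.Icc 1 (n - 1), γ n i)
    {a b : ℕ} (hab : a ≤ b) {t : ℝ} (ht : 0 ≤ t) :
    Rl f γ lam b t - Rl f γ lam a t ≤ 2 * ((b : ℝ) - a) := by
  induction b, hab using Nat.le_induction with
  | base => simp
  | succ n hn ih =>
      have := Rl_inc_le hf hm hlam hsum hsupp hγ_zero hγ_rec hγ_diag n ht
      push_cast
      push_cast at ih
      linarith

end Increment
/-- remaining-mass function for the circle process -/
def Qc (f : ℕ → ℝ) (tγ : ℕ → ℕ → ℝ) (lam : ℝ) (n : ℕ) (t : ℝ) : ℝ :=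
  (∑ i ∈ Finset.Icc 1 (n - 1), tγ n i * Real.exp (-(lam * Gp f i) * t))
    + tγ n n * Real.exp (-(lam * (n : ℝ)) * t)

/-- averaged line process -/
def Wc (f : ℕ → ℝ) (γ : ℕ → ℕ → ℝ) (lam : ℝ) (n : ℕ) (t : ℝ) : ℝ :=
  ∑ k ∈ Finset.Icc 1 n, f k * Rl f γ lam (n - k) t

section Circle

variable {m : ℕ} {f : ℕ → ℝ} {lam : ℝ} {γ tγ : ℕ → ℕ → ℝ}

lemma sum_pad (hsupp : ∀ k : ℕ, k = 0 ∨ m < k → f k = 0) {n : ℕ} (hn : m ≤ n) (g : ℕ → ℝ) :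
    ∑ k ∈ Finset.Icc 1 n, f k * g k = ∑ k ∈ Finset.Icc 1 m, f k * g k := by
  refine (Finset.sum_subset (Finset.Icc_subset_Icc le_rfl hn) ?_).symm
  intro x hx hx'
  simp only [Finset.mem_Icc] at hx hx'
  rw [hsupp x (Or.inr (by omega))]
  ring

lemma sum_f_one (hsum : ∑ k ∈ Finset.Icc 1 m, f k = 1)
    (hsupp : ∀ k : ℕ, k = 0 ∨ m < k → f k = 0) {n : ℕ} (hn : m ≤ n) :
    ∑ k ∈ Finset.Icc 1 n, f k = 1 := by
  have h := sum_pad (f := f) hsupp hn (fun _ => (1 : ℝ))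
  simp only [mul_one] at h
  rw [h, hsum]

lemma sum_f_mu (hsupp : ∀ k : ℕ, k = 0 ∨ m < k → f k = 0) {n : ℕ} (hn : m ≤ n) :
    ∑ k ∈ Finset.Icc 1 n, f k * (k : ℝ) = muF f m := by
  rw [sum_pad (f := f) hsupp hn (fun k => (k : ℝ))]
  unfold muF
  apply Finset.sum_congr rfl
  intro k _
  ring

/-- coefficient identity for the circle coefficients -/
lemma tgamma_ident (hf : ∀ k, 0 ≤ f k) (hm : 1 ≤ m)
    (hsum : ∑ k ∈ Finset.Icc 1 m, f k = 1)
    (hsupp : ∀ k : ℕ, k = 0 ∨ m < k → f k = 0)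
    (htγ_rec : ∀ n i : ℕ, m ≤ n → 1 ≤ i → i ≤ n - 1 →
      tγ n i = (∑ k ∈ Finset.Icc 1 (n - i), f k * γ (n - k) i) /
        (1 - (1 / (n : ℝ)) * ∑ j ∈ Finset.Icc 1 i, cdfF f j))
    {n i : ℕ} (hn : m ≤ n) (h1 : 1 ≤ i) (hi : i ≤ n - 1) :
    ((n : ℝ) - Gp f i) * tγ n i
      = (n : ℝ) * ∑ k ∈ Finset.Icc 1 (n - i), f k * γ (n - k) i := by
  have hnpos : (0 : ℝ) < (n : ℝ) := by
    have : 1 ≤ n := le_trans hm hn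
    exact_mod_cast this
  have hGi : Gp f i ≤ (i : ℝ) := Gp_le hf hm hsum hsupp i
  have hGlt : Gp f i < (n : ℝ) := by
    have : (i : ℝ) < (n : ℝ) := by
      have : i < n := by omega
      exact_mod_cast this
    linarith
  have hne : (n : ℝ) - Gp f i ≠ 0 := by linarith
  have hrec := htγ_rec n i hn h1 hi
  have hGdef : ∑ j ∈ Finset.Icc 1 i, cdfF f j = Gp f i := rfl
  rw [hGdef] at hrec
  have hden : (1 : ℝ) - (1 / (n : ℝ)) * Gp f i = ((n : ℝ) - Gp f i) / (n : ℝ) := by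
    field_simp
  rw [hden] at hrec
  rw [hrec]
  field_simp

/-- `Q(0) = n` -/
lemma Qc_zero (htγ_diag : ∀ n : ℕ, m ≤ n →
      tγ n n = (n : ℝ) - ∑ i ∈ Finset.Icc 1 (n - 1), tγ n i)
    {n : ℕ} (hn : m ≤ n) : Qc f tγ lam n 0 = (n : ℝ) := by
  unfold Qc
  simp only [mul_zero, Real.exp_zero, mul_one]
  rw [htγ_diag n hn]
  ring

/-- `W(0) = n - μ` -/
lemma Wc_zero (hf : ∀ k, 0 ≤ f k) (hm : 1 ≤ m)
    (hsum : ∑ k ∈ Finset.Icc 1 m, f k = 1)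
    (hsupp : ∀ k : ℕ, k = 0 ∨ m < k → f k = 0)
    (hγ_zero : ∀ n j : ℕ, cdfF f n = 0 → 1 ≤ j → j ≤ n → γ n j = 1)
    (hγ_diag : ∀ n : ℕ, 0 < cdfF f n →
      γ n n = (n : ℝ) - ∑ i ∈ Finset.Icc 1 (n - 1), γ n i)
    {n : ℕ} (hn : m ≤ n) : Wc f γ lam n 0 = (n : ℝ) - muF f m := by
  unfold Wc
  have hterm : ∀ k ∈ Finset.Icc 1 n, f k * Rl f γ lam (n - k) 0 = f k * ((n : ℝ) - k) := by
    intro k hk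
    simp only [Finset.mem_Icc] at hk
    rw [Rl_zero_eq hf hγ_zero hγ_diag (n - k)]
    congr 1
    push_cast [Nat.cast_sub (by omega : k ≤ n)]
    ring
  rw [Finset.sum_congr rfl hterm]
  have h1 : ∑ k ∈ Finset.Icc 1 n, f k * ((n : ℝ) - k)
      = (n : ℝ) * (∑ k ∈ Finset.Icc 1 n, f k) - ∑ k ∈ Finset.Icc 1 n, f k * (k : ℝ) := by
    rw [Finset.mul_sum, ← Finset.sum_sub_distrib]
    apply Finset.sum_congr rfl; intro k _; ring
  rw [h1, sum_f_one hsum hsupp hn, sum_f_mu hsupp hn]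
  ring

/-- the key sum identity for the circle ODE -/
lemma circle_sum_id (hf : ∀ k, 0 ≤ f k) (hm : 1 ≤ m)
    (hsum : ∑ k ∈ Finset.Icc 1 m, f k = 1)
    (hsupp : ∀ k : ℕ, k = 0 ∨ m < k → f k = 0)
    (htγ_rec : ∀ n i : ℕ, m ≤ n → 1 ≤ i → i ≤ n - 1 →
      tγ n i = (∑ k ∈ Finset.Icc 1 (n - i), f k * γ (n - k) i) /
        (1 - (1 / (n : ℝ)) * ∑ j ∈ Finset.Icc 1 i, cdfF f j))
    {n : ℕ} (hn : m ≤ n) (t : ℝ) :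
    ∑ i ∈ Finset.Icc 1 (n - 1), ((n : ℝ) - Gp f i) * tγ n i * Real.exp (-(lam * Gp f i) * t)
      = (n : ℝ) * Wc f γ lam n t := by
  have step : ∀ i ∈ Finset.Icc 1 (n - 1),
      ((n : ℝ) - Gp f i) * tγ n i * Real.exp (-(lam * Gp f i) * t)
        = ∑ k ∈ Finset.Icc 1 (n - i),
            (n : ℝ) * (f k * (γ (n - k) i * Real.exp (-(lam * Gp f i) * t))) := by
    intro i hi
    simp only [Finset.mem_Icc] at hi
    rw [tgamma_ident hf hm hsum hsupp htγ_rec hn hi.1 hi.2]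
    rw [Finset.mul_sum, Finset.sum_mul]
    apply Finset.sum_congr rfl
    intro k _
    ring
  rw [Finset.sum_congr rfl step]
  -- extend the outer sum from Icc 1 (n-1) to Icc 1 n (the i = n term is empty)
  have hext : ∑ i ∈ Finset.Icc 1 (n - 1), ∑ k ∈ Finset.Icc 1 (n - i),
        (n : ℝ) * (f k * (γ (n - k) i * Real.exp (-(lam * Gp f i) * t)))
      = ∑ i ∈ Finset.Icc 1 n, ∑ k ∈ Finset.Icc 1 (n - i),
        (n : ℝ) * (f k * (γ (n - k) i * Real.exp (-(lam * Gp f i) * t))) := by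
    have hn1 : 1 ≤ n := le_trans hm hn
    rw [show n = (n - 1) + 1 from by omega]
    rw [Finset.sum_Icc_succ_top (by omega : 1 ≤ (n-1)+1)]
    rw [show (n - 1) + 1 = n from by omega]
    simp
  rw [hext, swapA n (fun i k => (n : ℝ) * (f k * (γ (n - k) i * Real.exp (-(lam * Gp f i) * t))))]
  unfold Wc
  rw [Finset.mul_sum]
  -- extend RHS from Icc 1 (n-1) to Icc 1 n : the k = n term vanishes since Rl 0 = 0
  have hn1 : 1 ≤ n := le_trans hm hn
  rw [show n = (n - 1) + 1 from by omega, Finset.sum_Icc_succ_top (by omega : 1 ≤ (n-1)+1)]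
  rw [show (n - 1) + 1 = n from by omega]
  have hlast : (n : ℝ) * (f n * Rl f γ lam (n - n) t) = 0 := by
    simp [Rl, Finset.Icc_eq_empty_of_lt]
  rw [hlast, add_zero]
  apply Finset.sum_congr rfl
  intro k hk
  simp only [Finset.mem_Icc] at hk
  unfold Rl
  simp only [Finset.mul_sum]
  try (apply Finset.sum_congr rfl
       intro i _
       ring)

lemma hasDerivAt_Qc {n : ℕ} (t : ℝ) :
    HasDerivAt (fun u => Qc f tγ lam n u)
      ((∑ i ∈ Finset.Icc 1 (n - 1),
          tγ n i * (-(lam * Gp f i) * Real.exp (-(lam * Gp f i) * t)))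
        + tγ n n * (-(lam * (n : ℝ)) * Real.exp (-(lam * (n : ℝ)) * t))) t := by
  unfold Qc
  apply HasDerivAt.add
  · exact hasDerivAt_expsum (Finset.Icc 1 (n - 1)) (fun i => tγ n i)
      (fun i => -(lam * Gp f i)) t
  · have h := (((hasDerivAt_id t).const_mul (-(lam * (n : ℝ)))).exp).const_mul (tγ n n)
    simp only [id_eq, mul_one] at h
    exact h.congr_deriv (by ring)

lemma hasDerivAt_Wc {n : ℕ} (t : ℝ) :
    HasDerivAt (fun u => Wc f γ lam n u)
      (∑ k ∈ Finset.Icc 1 n, f k * (-lam * Sl f γ lam (n - k) t)) t := by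
  unfold Wc
  apply HasDerivAt.fun_sum
  intro k _
  exact (hasDerivAt_Rl (n - k) t).const_mul (f k)

end Circle
section Final

variable {m : ℕ} {f : ℕ → ℝ} {lam : ℝ} {γ tγ : ℕ → ℕ → ℝ}

lemma hasDerivAt_Qc' (hf : ∀ k, 0 ≤ f k) (hm : 1 ≤ m)
    (hsum : ∑ k ∈ Finset.Icc 1 m, f k = 1)
    (hsupp : ∀ k : ℕ, k = 0 ∨ m < k → f k = 0)
    (htγ_rec : ∀ n i : ℕ, m ≤ n → 1 ≤ i → i ≤ n - 1 →
      tγ n i = (∑ k ∈ Finset.Icc 1 (n - i), f k * γ (n - k) i) /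
        (1 - (1 / (n : ℝ)) * ∑ j ∈ Finset.Icc 1 i, cdfF f j))
    {n : ℕ} (hn : m ≤ n) (t : ℝ) :
    HasDerivAt (fun u => Qc f tγ lam n u)
      (-(lam * (n : ℝ)) * (Qc f tγ lam n t - Wc f γ lam n t)) t := by
  have h := hasDerivAt_Qc (f := f) (tγ := tγ) (lam := lam) (n := n) t
  have hid := circle_sum_id (γ := γ) (lam := lam) hf hm hsum hsupp htγ_rec hn t
  have h1 : ∑ i ∈ Finset.Icc 1 (n-1),
        ((n : ℝ) - Gp f i) * tγ n i * Real.exp (-(lam * Gp f i) * t)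
      = (n : ℝ) * (∑ i ∈ Finset.Icc 1 (n-1), tγ n i * Real.exp (-(lam * Gp f i) * t))
        - ∑ i ∈ Finset.Icc 1 (n-1), Gp f i * tγ n i * Real.exp (-(lam * Gp f i) * t) := by
    rw [Finset.mul_sum, ← Finset.sum_sub_distrib]
    apply Finset.sum_congr rfl; intro i _; ring
  have h2 : ∑ i ∈ Finset.Icc 1 (n-1),
        tγ n i * (-(lam * Gp f i) * Real.exp (-(lam * Gp f i) * t))
      = -lam * ∑ i ∈ Finset.Icc 1 (n-1), Gp f i * tγ n i * Real.exp (-(lam * Gp f i) * t) := by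
    rw [Finset.mul_sum]
    apply Finset.sum_congr rfl; intro i _; ring
  have goal_eq : (∑ i ∈ Finset.Icc 1 (n - 1),
          tγ n i * (-(lam * Gp f i) * Real.exp (-(lam * Gp f i) * t)))
        + tγ n n * (-(lam * (n : ℝ)) * Real.exp (-(lam * (n : ℝ)) * t))
      = -(lam * (n : ℝ)) * (Qc f tγ lam n t - Wc f γ lam n t) := by
    unfold Qc
    rw [h2]
    linear_combination lam * hid - lam * h1
  rw [goal_eq] at h
  exact h

/-- `W(t) ≤ Q(t)` for `t ≥ 0` -/
lemma W_le_Q (hf : ∀ k, 0 ≤ f k) (hm : 1 ≤ m) (hlam : 0 < lam)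
    (hsum : ∑ k ∈ Finset.Icc 1 m, f k = 1)
    (hsupp : ∀ k : ℕ, k = 0 ∨ m < k → f k = 0)
    (hγ_zero : ∀ n j : ℕ, cdfF f n = 0 → 1 ≤ j → j ≤ n → γ n j = 1)
    (hγ_rec : ∀ n i : ℕ, 0 < cdfF f n → 1 ≤ i → i < n →
      γ n i = 2 * (∑ j ∈ Finset.Icc 1 (n - i), cdfF f j * γ (n - j) i) /
        (∑ k ∈ Finset.Icc (i + 1) n, cdfF f k))
    (hγ_diag : ∀ n : ℕ, 0 < cdfF f n →
      γ n n = (n : ℝ) - ∑ i ∈ Finset.Icc 1 (n - 1), γ n i)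
    (htγ_rec : ∀ n i : ℕ, m ≤ n → 1 ≤ i → i ≤ n - 1 →
      tγ n i = (∑ k ∈ Finset.Icc 1 (n - i), f k * γ (n - k) i) /
        (1 - (1 / (n : ℝ)) * ∑ j ∈ Finset.Icc 1 i, cdfF f j))
    (htγ_diag : ∀ n : ℕ, m ≤ n →
      tγ n n = (n : ℝ) - ∑ i ∈ Finset.Icc 1 (n - 1), tγ n i)
    {n : ℕ} (hn : m ≤ n) {t : ℝ} (ht : 0 ≤ t) :
    Wc f γ lam n t ≤ Qc f tγ lam n t := by
  set b := lam * (n : ℝ) with hb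
  have hd : ∀ u, HasDerivAt
      (fun v => Real.exp (b * v) * (Qc f tγ lam n v - Wc f γ lam n v))
      (Real.exp (b * u) * (b * (Qc f tγ lam n u - Wc f γ lam n u)
        + (-(lam * (n : ℝ)) * (Qc f tγ lam n u - Wc f γ lam n u)
            - ∑ k ∈ Finset.Icc 1 n, f k * (-lam * Sl f γ lam (n - k) u)))) u := by
    intro u
    apply hasDerivAt_exp_mul b
    intro v
    exact (hasDerivAt_Qc' hf hm hsum hsupp htγ_rec hn v).sub (hasDerivAt_Wc v)
  have hpos : ∀ u : ℝ, 0 ≤ u → 0 ≤ Real.exp (b * u) * (b * (Qc f tγ lam n u - Wc f γ lam n u)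
        + (-(lam * (n : ℝ)) * (Qc f tγ lam n u - Wc f γ lam n u)
            - ∑ k ∈ Finset.Icc 1 n, f k * (-lam * Sl f γ lam (n - k) u))) := by
    intro u hu
    apply mul_nonneg (Real.exp_nonneg _)
    have key : b * (Qc f tγ lam n u - Wc f γ lam n u)
        + (-(lam * (n : ℝ)) * (Qc f tγ lam n u - Wc f γ lam n u)
            - ∑ k ∈ Finset.Icc 1 n, f k * (-lam * Sl f γ lam (n - k) u))
        = lam * ∑ k ∈ Finset.Icc 1 n, f k * Sl f γ lam (n - k) u := by
      rw [hb, Finset.mul_sum]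
      have : ∀ k ∈ Finset.Icc 1 n, f k * (-lam * Sl f γ lam (n - k) u)
          = -(lam * (f k * Sl f γ lam (n - k) u)) := by intro k _; ring
      rw [Finset.sum_congr rfl this, Finset.sum_neg_distrib]
      ring
    rw [key]
    apply mul_nonneg hlam.le
    apply Finset.sum_nonneg
    intro k _
    exact mul_nonneg (hf k) (Sl_nonneg hf hlam hγ_zero hγ_rec hγ_diag (n - k) u hu)
  have hmono := ge_of_deriv hd hpos ht
  have h0 : Real.exp (b * 0) * (Qc f tγ lam n 0 - Wc f γ lam n 0) = muF f m := by
    rw [Qc_zero htγ_diag hn, Wc_zero hf hm hsum hsupp hγ_zero hγ_diag hn]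
    simp
  rw [h0] at hmono
  have hexp : 0 < Real.exp (b * t) := Real.exp_pos _
  have hmu : 0 ≤ muF f m := le_trans zero_le_one (muF_ge_one hf hm hsum hsupp)
  nlinarith

/-- `Q(t) ≤ W(t) + μ` for `t ≥ 0` -/
lemma Q_le_W (hf : ∀ k, 0 ≤ f k) (hm : 1 ≤ m) (hlam : 0 < lam)
    (hsum : ∑ k ∈ Finset.Icc 1 m, f k = 1)
    (hsupp : ∀ k : ℕ, k = 0 ∨ m < k → f k = 0)
    (hγ_zero : ∀ n j : ℕ, cdfF f n = 0 → 1 ≤ j → j ≤ n → γ n j = 1)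
    (hγ_rec : ∀ n i : ℕ, 0 < cdfF f n → 1 ≤ i → i < n →
      γ n i = 2 * (∑ j ∈ Finset.Icc 1 (n - i), cdfF f j * γ (n - j) i) /
        (∑ k ∈ Finset.Icc (i + 1) n, cdfF f k))
    (hγ_diag : ∀ n : ℕ, 0 < cdfF f n →
      γ n n = (n : ℝ) - ∑ i ∈ Finset.Icc 1 (n - 1), γ n i)
    (htγ_rec : ∀ n i : ℕ, m ≤ n → 1 ≤ i → i ≤ n - 1 →
      tγ n i = (∑ k ∈ Finset.Icc 1 (n - i), f k * γ (n - k) i) /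
        (1 - (1 / (n : ℝ)) * ∑ j ∈ Finset.Icc 1 i, cdfF f j))
    (htγ_diag : ∀ n : ℕ, m ≤ n →
      tγ n n = (n : ℝ) - ∑ i ∈ Finset.Icc 1 (n - 1), tγ n i)
    {n : ℕ} (hn : m ≤ n) {t : ℝ} (ht : 0 ≤ t) :
    Qc f tγ lam n t ≤ Wc f γ lam n t + muF f m := by
  have hnpos : (0 : ℝ) < (n : ℝ) := by
    have : 1 ≤ n := le_trans hm hn
    exact_mod_cast this
  set A : ℝ := (∑ k ∈ Finset.Icc 1 n, f k * Dp f (n - k)) / n with hA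
  have hAmu : A ≤ muF f m := by
    have hbound : ∑ k ∈ Finset.Icc 1 n, f k * Dp f (n - k)
        ≤ ∑ k ∈ Finset.Icc 1 n, f k * (muF f m * n) := by
      apply Finset.sum_le_sum
      intro k hk
      simp only [Finset.mem_Icc] at hk
      have h1 : Dp f (n - k) ≤ muF f m * (n - k : ℕ) := Dp_le hf hm hsum hsupp (n - k)
      have h2 : muF f m * ((n - k : ℕ) : ℝ) ≤ muF f m * n := by
        apply mul_le_mul_of_nonneg_left _ (le_trans zero_le_one (muF_ge_one hf hm hsum hsupp))
        have : (n - k : ℕ) ≤ n := by omega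
        exact_mod_cast this
      exact mul_le_mul_of_nonneg_left (le_trans h1 h2) (hf k)
    rw [← Finset.sum_mul, sum_f_one hsum hsupp hn, one_mul] at hbound
    rw [hA, div_le_iff₀ hnpos]
    linarith [hbound]
  set b := lam * (n : ℝ) with hb
  have hd : ∀ u, HasDerivAt
      (fun v => Real.exp (b * v) * (Wc f γ lam n v + A - Qc f tγ lam n v))
      (Real.exp (b * u) * (b * (Wc f γ lam n u + A - Qc f tγ lam n u)
        + ((∑ k ∈ Finset.Icc 1 n, f k * (-lam * Sl f γ lam (n - k) u))
            - -(lam * (n : ℝ)) * (Qc f tγ lam n u - Wc f γ lam n u)))) u := by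
    intro u
    apply hasDerivAt_exp_mul b
    intro v
    exact ((hasDerivAt_Wc v).add_const A).sub (hasDerivAt_Qc' hf hm hsum hsupp htγ_rec hn v)
  have hpos : ∀ u : ℝ, 0 ≤ u → 0 ≤ Real.exp (b * u) * (b * (Wc f γ lam n u + A - Qc f tγ lam n u)
        + ((∑ k ∈ Finset.Icc 1 n, f k * (-lam * Sl f γ lam (n - k) u))
            - -(lam * (n : ℝ)) * (Qc f tγ lam n u - Wc f γ lam n u))) := by
    intro u hu
    apply mul_nonneg (Real.exp_nonneg _)
    have key : b * (Wc f γ lam n u + A - Qc f tγ lam n u)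
        + ((∑ k ∈ Finset.Icc 1 n, f k * (-lam * Sl f γ lam (n - k) u))
            - -(lam * (n : ℝ)) * (Qc f tγ lam n u - Wc f γ lam n u))
        = lam * ((n : ℝ) * A - ∑ k ∈ Finset.Icc 1 n, f k * Sl f γ lam (n - k) u) := by
      rw [hb]
      have hsplit : ∑ k ∈ Finset.Icc 1 n, f k * (-lam * Sl f γ lam (n - k) u)
          = -lam * ∑ k ∈ Finset.Icc 1 n, f k * Sl f γ lam (n - k) u := by
        rw [Finset.mul_sum]
        apply Finset.sum_congr rfl; intro k _; ring
      rw [hsplit]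
      ring
    rw [key]
    apply mul_nonneg hlam.le
    have hnA : (n : ℝ) * A = ∑ k ∈ Finset.Icc 1 n, f k * Dp f (n - k) := by
      rw [hA]; field_simp
    rw [hnA]
    have hle : ∑ k ∈ Finset.Icc 1 n, f k * Sl f γ lam (n - k) u
        ≤ ∑ k ∈ Finset.Icc 1 n, f k * Dp f (n - k) := by
      apply Finset.sum_le_sum
      intro k _
      exact mul_le_mul_of_nonneg_left
        (Sl_le hf hlam hγ_zero hγ_rec hγ_diag (n - k) u hu) (hf k)
    linarith
  have hmono := ge_of_deriv hd hpos ht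
  have h0 : Real.exp (b * 0) * (Wc f γ lam n 0 + A - Qc f tγ lam n 0)
      = A - muF f m := by
    rw [Qc_zero htγ_diag hn, Wc_zero hf hm hsum hsupp hγ_zero hγ_diag hn]
    simp
    ring
  rw [h0] at hmono
  -- from exp(bt) * X ≥ A - μ, exp(bt) ≥ 1, A ≤ μ conclude X ≥ A - μ
  set X := Wc f γ lam n t + A - Qc f tγ lam n t with hX
  have hexp1 : 1 ≤ Real.exp (b * t) := by
    rw [← Real.exp_zero]
    apply Real.exp_le_exp.mpr
    have : 0 ≤ b := mul_nonneg hlam.le hnpos.le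
    nlinarith
  rcases le_or_gt 0 X with hx | hx
  · linarith
  · nlinarith

end Final
section Main

variable {m : ℕ} {f : ℕ → ℝ} {lam : ℝ} {γ tγ : ℕ → ℕ → ℝ}

lemma Rfun_eq (hf : ∀ k, 0 ≤ f k)
    (hγ_zero : ∀ n j : ℕ, cdfF f n = 0 → 1 ≤ j → j ≤ n → γ n j = 1)
    (t : ℝ) (j : ℕ) : Rfun f γ lam t j = Rl f γ lam j t := by
  unfold Rfun Rl
  split_ifs with h
  · rfl
  · have hz : cdfF f j = 0 := le_antisymm (not_lt.mp h) (cdfF_nonneg hf j)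
    have : ∀ i ∈ Finset.Icc 1 j, γ j i * Real.exp (-(lam * Gp f i) * t) = 1 := by
      intro i hi
      simp only [Finset.mem_Icc] at hi
      rw [hγ_zero j i hz hi.1 hi.2, Gp_eq_zero_of hf hi.2 hz]
      simp
    rw [Finset.sum_congr rfl this]
    simp

lemma Cfun_eq (t : ℝ) (n : ℕ) : Cfun f tγ lam t n = (n : ℝ) - Qc f tγ lam n t := by
  unfold Cfun Qc
  have : (∑ i ∈ Finset.Icc 1 (n - 1),
      tγ n i * Real.exp (-(lam * ∑ j ∈ Finset.Icc 1 i, cdfF f j) * t))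
      = ∑ i ∈ Finset.Icc 1 (n - 1), tγ n i * Real.exp (-(lam * Gp f i) * t) := rfl
  rw [this]
  ring

end Main

/-- Let `κ = (m+1)/(m-μ+1)`. For every `t ≥ 0` and `n ≥ m`,
`K(t,n-m) - m - mκ ≤ C(t,n) ≤ μ + K(t,n) + mκ`. -/
theorem stmt_17
    (m : ℕ) (hm : 1 ≤ m) (f : ℕ → ℝ)
    (hf_nonneg : ∀ k, 0 ≤ f k)
    (hf_sum : ∑ k ∈ Finset.Icc 1 m, f k = 1)
    (hf_supp : ∀ k : ℕ, k = 0 ∨ m < k → f k = 0)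
    (lam : ℝ) (hlam : 0 < lam)
    (γ : ℕ → ℕ → ℝ)
    (hγ_zero : ∀ n j : ℕ, cdfF f n = 0 → 1 ≤ j → j ≤ n → γ n j = 1)
    (hγ_rec : ∀ n i : ℕ, 0 < cdfF f n → 1 ≤ i → i < n →
      γ n i = 2 * (∑ j ∈ Finset.Icc 1 (n - i), cdfF f j * γ (n - j) i) /
        (∑ k ∈ Finset.Icc (i + 1) n, cdfF f k))
    (hγ_diag : ∀ n : ℕ, 0 < cdfF f n →
      γ n n = (n : ℝ) - ∑ i ∈ Finset.Icc 1 (n - 1), γ n i)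
    (tγ : ℕ → ℕ → ℝ)
    (htγ_rec : ∀ n i : ℕ, m ≤ n → 1 ≤ i → i ≤ n - 1 →
      tγ n i = (∑ k ∈ Finset.Icc 1 (n - i), f k * γ (n - k) i) /
        (1 - (1 / (n : ℝ)) * ∑ j ∈ Finset.Icc 1 i, cdfF f j))
    (htγ_diag : ∀ n : ℕ, m ≤ n →
      tγ n n = (n : ℝ) - ∑ i ∈ Finset.Icc 1 (n - 1), tγ n i)
    (t : ℝ) (ht : 0 ≤ t) (n : ℕ) (hn : m ≤ n) :
    letI κ : ℝ := ((m : ℝ) + 1) / ((m : ℝ) - muF f m + 1)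
    Kfun f γ lam t (n - m) - (m : ℝ) - (m : ℝ) * κ ≤ Cfun f tγ lam t n
    ∧ Cfun f tγ lam t n ≤ muF f m + Kfun f γ lam t n + (m : ℝ) * κ := by
  set μ := muF f m with hμ
  set κ : ℝ := ((m : ℝ) + 1) / ((m : ℝ) - μ + 1) with hκdef
  have hμ1 : 1 ≤ μ := muF_ge_one hf_nonneg hm hf_sum hf_supp
  have hμm : μ ≤ (m : ℝ) := muF_le_m hf_nonneg hm hf_sum hf_supp
  -- κ ≥ 1
  have hden : (m : ℝ) - μ + 1 = Gp f m := by
    rw [hμ, muF_eq hf_sum]; ring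
  have hGm1 : 1 ≤ Gp f m := Gp_m_pos hf_nonneg hm hf_sum hf_supp
  have hκ1 : 1 ≤ κ := by
    rw [hκdef, hden, le_div_iff₀ (by linarith : (0:ℝ) < Gp f m)]
    have : Gp f m ≤ (m : ℝ) := Gp_le hf_nonneg hm hf_sum hf_supp m
    linarith
  have hmκ : μ ≤ (m : ℝ) * κ := by
    have h1 : (m : ℝ) ≤ (m : ℝ) * κ := by
      have hm1 : (1:ℝ) ≤ (m:ℝ) := by exact_mod_cast hm
      nlinarith
    linarith
  have hmκ0 : 0 ≤ (m : ℝ) * κ := by linarith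
  -- rewrite the functions
  have hC : Cfun f tγ lam t n = (n : ℝ) - Qc f tγ lam n t := Cfun_eq t n
  have hKn : Kfun f γ lam t n = (n : ℝ) - Rl f γ lam n t := by
    unfold Kfun; rw [Rfun_eq hf_nonneg hγ_zero]
  have hKnm : Kfun f γ lam t (n - m) = ((n - m : ℕ) : ℝ) - Rl f γ lam (n - m) t := by
    unfold Kfun; rw [Rfun_eq hf_nonneg hγ_zero]
  have hcastnm : ((n - m : ℕ) : ℝ) = (n : ℝ) - m := by
    push_cast [Nat.cast_sub hn]; ring
  have hQW := W_le_Q hf_nonneg hm hlam hf_sum hf_supp hγ_zero hγ_rec hγ_diag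
    htγ_rec htγ_diag hn ht
  have hQW2 := Q_le_W hf_nonneg hm hlam hf_sum hf_supp hγ_zero hγ_rec hγ_diag
    htγ_rec htγ_diag hn ht
  constructor
  · -- lower bound
    -- W ≤ R_{n-m} + 2(m - μ)
    have hWb : Wc f γ lam n t ≤ Rl f γ lam (n - m) t + 2 * ((m : ℝ) - μ) := by
      have hterm : ∀ k ∈ Finset.Icc 1 n, f k * Rl f γ lam (n - k) t
          ≤ f k * (Rl f γ lam (n - m) t + 2 * ((m : ℝ) - k)) := by
        intro k hk
        simp only [Finset.mem_Icc] at hk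
        rcases le_or_gt k m with hkm | hkm
        · apply mul_le_mul_of_nonneg_left _ (hf_nonneg k)
          have hchain := Rl_chain hf_nonneg hm hlam hf_sum hf_supp hγ_zero hγ_rec hγ_diag
            (by omega : n - m ≤ n - k) ht
          have hc1 : ((n - k : ℕ) : ℝ) = (n : ℝ) - k := by
            push_cast [Nat.cast_sub (by omega : k ≤ n)]; ring
          have hc2 : ((n - m : ℕ) : ℝ) = (n : ℝ) - m := hcastnm
          rw [hc1, hc2] at hchain
          linarith
        · rw [hf_supp k (Or.inr hkm)]
          simp
      have hs := Finset.sum_le_sum hterm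
      have hrhs : ∑ k ∈ Finset.Icc 1 n, f k * (Rl f γ lam (n - m) t + 2 * ((m : ℝ) - k))
          = Rl f γ lam (n - m) t * (∑ k ∈ Finset.Icc 1 n, f k)
            + 2 * ((m : ℝ) * (∑ k ∈ Finset.Icc 1 n, f k) - ∑ k ∈ Finset.Icc 1 n, f k * (k:ℝ)) := by
        simp only [Finset.mul_sum, ← Finset.sum_add_distrib, ← Finset.sum_sub_distrib]
        apply Finset.sum_congr rfl; intro k _; ring
      rw [hrhs, sum_f_one hf_sum hf_supp hn, sum_f_mu hf_supp hn] at hs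
      unfold Wc
      rw [hμ]
      linarith [hs]
    rw [hC, hKnm, hcastnm]
    have : Qc f tγ lam n t ≤ Rl f γ lam (n - m) t + 2 * ((m:ℝ) - μ) + μ := by linarith
    linarith
  · -- upper bound
    have hWb : (n : ℝ) - Wc f γ lam n t
        ≤ ((n : ℝ) - Rl f γ lam n t) + 2 * μ := by
      have hexp : (n : ℝ) - Wc f γ lam n t
          = ∑ k ∈ Finset.Icc 1 n, f k * ((n : ℝ) - Rl f γ lam (n - k) t) := by
        unfold Wc
        have h1 : ∑ k ∈ Finset.Icc 1 n, f k * ((n : ℝ) - Rl f γ lam (n - k) t)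
            = (n : ℝ) * (∑ k ∈ Finset.Icc 1 n, f k)
              - ∑ k ∈ Finset.Icc 1 n, f k * Rl f γ lam (n - k) t := by
          simp only [Finset.mul_sum, ← Finset.sum_sub_distrib]
          apply Finset.sum_congr rfl; intro k _; ring
        rw [h1, sum_f_one hf_sum hf_supp hn]
        ring
      rw [hexp]
      have hterm : ∀ k ∈ Finset.Icc 1 n, f k * ((n : ℝ) - Rl f γ lam (n - k) t)
          ≤ f k * (((n : ℝ) - Rl f γ lam n t) + 2 * (k : ℝ)) := by
        intro k hk
        simp only [Finset.mem_Icc] at hk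
        apply mul_le_mul_of_nonneg_left _ (hf_nonneg k)
        have hchain := Rl_chain hf_nonneg hm hlam hf_sum hf_supp hγ_zero hγ_rec hγ_diag
          (by omega : n - k ≤ n) ht
        have hc1 : ((n - k : ℕ) : ℝ) = (n : ℝ) - k := by
          push_cast [Nat.cast_sub (by omega : k ≤ n)]; ring
        rw [hc1] at hchain
        linarith
      have hs := Finset.sum_le_sum hterm
      have hrhs : ∑ k ∈ Finset.Icc 1 n, f k * (((n : ℝ) - Rl f γ lam n t) + 2 * (k : ℝ))
          = ((n : ℝ) - Rl f γ lam n t) * (∑ k ∈ Finset.Icc 1 n, f k)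
            + 2 * ∑ k ∈ Finset.Icc 1 n, f k * (k : ℝ) := by
        simp only [Finset.mul_sum, ← Finset.sum_add_distrib]
        apply Finset.sum_congr rfl; intro k _; ring
      rw [hrhs, sum_f_one hf_sum hf_supp hn, sum_f_mu hf_supp hn] at hs
      rw [hμ]
      linarith
    rw [hC, hKn]
    linarith

end
end

section
/- For any points x_1, …, x_n in a metric space with distinguished depot point x₀ and any vehicle capacity V ∈ ℕ with V ≥ 1, the optimal routing lengths satisfy max{ 2 n r̄ / V, L_TSP } ≤ L_CVRP ≤ 2 (n/V + 1) r̄ + L_TSP, where r̄ = (1/n) ∑_{i=1}^n d(x_i, x₀). -/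
open Finset

noncomputable section

variable {X : Type*} [MetricSpace X]

/-- Length of the path that starts at `a`, visits the points of `l` in order, and returns to
the depot `x0`. -/
def pathLen (x0 : X) : X → List X → ℝ
  | a, [] => dist a x0
  | a, b :: l => dist a b + pathLen x0 b l

/-- Length of the closed tour starting and ending at the depot `x0` and visiting the points
of `l` in order (`0` for the empty list). -/
def tourLen (x0 : X) : List X → ℝ
  | [] => 0
  | a :: l => dist x0 a + pathLen x0 a l

/-- The traveling-salesman length: the minimum, over all orderings (permutations) of the
points of `l`, of the length of the closed tour through the depot `x0` and all the points. -/
def tspLen (x0 : X) (l : List X) : ℝ :=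
  sInf { y : ℝ | ∃ p : List X, p.Perm l ∧ y = tourLen x0 p }

/-- The capacitated-vehicle-routing length: the minimum over all partitions of the points
of `l` into blocks of cardinality at most `V` of the sum over blocks of the traveling-salesman
length of each block (each block is a closed tour through the depot `x0`). -/
def cvrpLen (x0 : X) (V : ℕ) (l : List X) : ℝ :=
  sInf { y : ℝ | ∃ P : List (List X), P.flatten.Perm l ∧ (∀ b ∈ P, b.length ≤ V) ∧
    y = (P.map (tspLen x0)).sum }

namespace Stmt19

variable (x0 : X)

theorem pathLen_nonneg (a : X) (l : List X) : 0 ≤ pathLen x0 a l := by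
  induction l generalizing a with
  | nil => exact dist_nonneg
  | cons b l ih => exact add_nonneg dist_nonneg (ih b)

theorem tourLen_nonneg (l : List X) : 0 ≤ tourLen x0 l := by
  cases l with
  | nil => exact le_refl 0
  | cons a l => exact add_nonneg dist_nonneg (pathLen_nonneg x0 a l)

theorem dist_le_pathLen (a : X) (l : List X) : dist a x0 ≤ pathLen x0 a l := by
  induction l generalizing a with
  | nil => exact le_refl _
  | cons b l ih =>
    calc dist a x0 ≤ dist a b + dist b x0 := dist_triangle a b x0
    _ ≤ dist a b + pathLen x0 b l := by linarith [ih b]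

theorem pathLen_mem {a : X} {l : List X} (c : X) (ha : a ∈ l) :
    dist c a + dist a x0 ≤ pathLen x0 c l := by
  induction l generalizing c with
  | nil => exact absurd ha (List.not_mem_nil (a := a))
  | cons b l ih =>
    rcases List.mem_cons.1 ha with rfl | ha'
    · show _ ≤ dist c a + pathLen x0 a l
      linarith [dist_le_pathLen x0 a l]
    · show _ ≤ dist c b + pathLen x0 b l
      calc dist c a + dist a x0 ≤ (dist c b + dist b a) + dist a x0 := by
            linarith [dist_triangle c b a]
      _ ≤ dist c b + pathLen x0 b l := by linarith [ih b ha']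

theorem two_dist_le_tourLen {a : X} {p : List X} (ha : a ∈ p) :
    2 * dist a x0 ≤ tourLen x0 p := by
  cases p with
  | nil => exact absurd ha (List.not_mem_nil (a := a))
  | cons b l =>
    show _ ≤ dist x0 b + pathLen x0 b l
    rcases List.mem_cons.1 ha with rfl | ha'
    · have := dist_le_pathLen x0 a l
      rw [dist_comm x0 a]; linarith
    · have h1 := pathLen_mem x0 b ha'
      have h2 := dist_triangle x0 b a
      rw [dist_comm x0 a] at h2
      linarith

/-- distance from the depot to the head of a list (`0` for the empty list). -/
def hd0 (x0 : X) : List X → ℝ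
  | [] => 0
  | a :: _ => dist x0 a

theorem hd0_nonneg (l : List X) : 0 ≤ hd0 x0 l := by
  cases l with
  | nil => exact le_refl 0
  | cons a l => exact dist_nonneg

/-- sum of the distances from the depot to the points of `l`. -/
def dsum (x0 : X) (l : List X) : ℝ := (l.map fun a => dist x0 a).sum

theorem dsum_nonneg (l : List X) : 0 ≤ dsum x0 l :=
  List.sum_nonneg (by rintro y hy; simp only [List.mem_map] at hy
                      obtain ⟨a, -, rfl⟩ := hy; exact dist_nonneg)

theorem dsum_cons (a : X) (l : List X) : dsum x0 (a :: l) = dist x0 a + dsum x0 l := rfl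

theorem dsum_append (l1 l2 : List X) : dsum x0 (l1 ++ l2) = dsum x0 l1 + dsum x0 l2 := by
  simp [dsum]

theorem dsum_perm {l1 l2 : List X} (h : l1.Perm l2) : dsum x0 l1 = dsum x0 l2 :=
  (h.map _).sum_eq


-- splitting a tour into two tours costs at most twice the head distance of the second part
theorem pathLen_split (a : X) (l1 l2 : List X) :
    pathLen x0 a l1 + tourLen x0 l2 ≤ pathLen x0 a (l1 ++ l2) + 2 * hd0 x0 l2 := by
  induction l1 generalizing a with
  | nil =>
    cases l2 with
    | nil => simp [tourLen, hd0, pathLen]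
    | cons b l2' =>
      show dist a x0 + (dist x0 b + pathLen x0 b l2') ≤
        (dist a b + pathLen x0 b l2') + 2 * dist x0 b
      have := dist_triangle a b x0
      rw [dist_comm b x0] at this
      linarith
  | cons c l1' ih =>
    show (dist a c + pathLen x0 c l1') + tourLen x0 l2 ≤
      (dist a c + pathLen x0 c (l1' ++ l2)) + 2 * hd0 x0 l2
    linarith [ih c]

theorem tourLen_split (l1 l2 : List X) :
    tourLen x0 l1 + tourLen x0 l2 ≤ tourLen x0 (l1 ++ l2) + 2 * hd0 x0 l2 := by
  cases l1 with
  | nil =>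
    show 0 + tourLen x0 l2 ≤ tourLen x0 l2 + 2 * hd0 x0 l2
    linarith [hd0_nonneg x0 l2]
  | cons a l1' =>
    show (dist x0 a + pathLen x0 a l1') + tourLen x0 l2 ≤
      (dist x0 a + pathLen x0 a (l1' ++ l2)) + 2 * hd0 x0 l2
    linarith [pathLen_split x0 a l1' l2]

-- merging two tours only shortens the total length
theorem pathLen_append_le (a : X) (l1 l2 : List X) :
    pathLen x0 a (l1 ++ l2) ≤ pathLen x0 a l1 + tourLen x0 l2 := by
  induction l1 generalizing a with
  | nil =>
    cases l2 with
    | nil => simp [tourLen, pathLen]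
    | cons b l2' =>
      show dist a b + pathLen x0 b l2' ≤ dist a x0 + (dist x0 b + pathLen x0 b l2')
      linarith [dist_triangle a x0 b]
  | cons c l1' ih =>
    show dist a c + pathLen x0 c (l1' ++ l2) ≤ (dist a c + pathLen x0 c l1') + tourLen x0 l2
    linarith [ih c]

theorem tourLen_append_le (l1 l2 : List X) :
    tourLen x0 (l1 ++ l2) ≤ tourLen x0 l1 + tourLen x0 l2 := by
  cases l1 with
  | nil => show tourLen x0 l2 ≤ 0 + tourLen x0 l2; linarith
  | cons a l1' =>
    show dist x0 a + pathLen x0 a (l1' ++ l2) ≤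
      (dist x0 a + pathLen x0 a l1') + tourLen x0 l2
    linarith [pathLen_append_le x0 a l1' l2]

/-- split a list into blocks of given sizes (the remainder is the final block). -/
def listSplit : List ℕ → List X → List (List X)
  | [], l => [l]
  | s :: ss, l => l.take s :: listSplit ss (l.drop s)

theorem flatten_listSplit (ss : List ℕ) (l : List X) : (listSplit ss l).flatten = l := by
  induction ss generalizing l with
  | nil => simp [listSplit]
  | cons s ss ih => simp [listSplit, ih]

theorem listSplit_length {V : ℕ} : ∀ (ss : List ℕ) (l : List X), (∀ s ∈ ss, s ≤ V) →
    l.length ≤ ss.sum → ∀ b ∈ listSplit ss l, b.length ≤ V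
  | [], l, _, hlen, b, hb => by
    simp only [listSplit, List.mem_singleton] at hb
    subst hb; simp only [List.sum_nil, Nat.le_zero] at hlen; omega
  | s :: ss, l, hss, hlen, b, hb => by
    simp only [listSplit, List.mem_cons] at hb
    rcases hb with rfl | hb
    · exact le_trans (by simpa using List.length_take_le s l) (hss s (by simp))
    · refine listSplit_length ss (l.drop s) (fun t ht => hss t (by simp [ht])) ?_ b hb
      simp only [List.length_drop, List.sum_cons] at hlen ⊢
      omega

theorem hd0_take {s : ℕ} (hs : 1 ≤ s) (l : List X) : hd0 x0 (l.take s) = hd0 x0 l := by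
  cases l with
  | nil => simp
  | cons a l =>
    cases s with
    | zero => omega
    | succ s => simp [hd0]

theorem sum_tour_listSplit : ∀ (ss : List ℕ), (∀ s ∈ ss, 1 ≤ s) → ∀ (l : List X),
    ((listSplit ss l).map (tourLen x0)).sum + 2 * hd0 x0 l ≤
      tourLen x0 l + 2 * ((listSplit ss l).map (hd0 x0)).sum
  | [], _, l => by simp [listSplit]
  | s :: ss, hss, l => by
    have ih := sum_tour_listSplit ss (fun t ht => hss t (by simp [ht])) (l.drop s)
    have hc := tourLen_split x0 (l.take s) (l.drop s)
    rw [List.take_append_drop] at hc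
    have htk : hd0 x0 (l.take s) = hd0 x0 l := hd0_take x0 (hss s (by simp)) l
    simp only [listSplit, List.map_cons, List.sum_cons, htk]
    linarith

/-- sum of head distances of the blocks when chopping into blocks of size `V`. -/
def Hsum (x0 : X) (V : ℕ) : ℕ → List X → ℝ
  | 0, m => hd0 x0 m
  | K + 1, m => hd0 x0 m + Hsum x0 V K (m.drop V)

theorem hsum_listSplit {V : ℕ} (hV : 1 ≤ V) : ∀ (K : ℕ) (m : List X),
    ((listSplit (List.replicate K V) m).map (hd0 x0)).sum = Hsum x0 V K m
  | 0, m => by simp [listSplit, Hsum]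
  | K + 1, m => by
    simp only [List.replicate_succ, listSplit, List.map_cons, List.sum_cons,
      hsum_listSplit hV K (m.drop V), hd0_take x0 hV m, Hsum]

theorem hsum_eq {V : ℕ} : ∀ (K : ℕ) (m : List X),
    Hsum x0 V K m = ∑ t ∈ range (K + 1), hd0 x0 (m.drop (t * V))
  | 0, m => by simp [Hsum]
  | K + 1, m => by
    have h : ∀ t : ℕ, (m.drop V).drop (t * V) = m.drop ((t + 1) * V) := by
      intro t; rw [List.drop_drop]; congr 1; ring
    rw [Finset.sum_range_succ' (fun t => hd0 x0 (m.drop (t * V))) (K + 1)]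
    simp only [Hsum, hsum_eq K (m.drop V), h, Nat.zero_mul, List.drop_zero]
    ring

theorem sum_hd0_drop_le : ∀ (l : List X) (M : ℕ),
    ∑ k ∈ range M, hd0 x0 (l.drop k) ≤ dsum x0 l
  | [], M => by
    simp only [List.drop_nil]
    simp [hd0, dsum]
  | a :: m, 0 => by simpa using dsum_nonneg x0 (a :: m)
  | a :: m, M + 1 => by
    rw [Finset.sum_range_succ' (fun k => hd0 x0 ((a :: m).drop k)) M]
    simp only [List.drop_succ_cons, List.drop_zero]
    have := sum_hd0_drop_le m M
    show _ + hd0 x0 (a :: m) ≤ dsum x0 (a :: m)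
    rw [dsum_cons]
    show _ + dist x0 a ≤ _
    linarith

theorem sum_hd0_drop_succ_le (l : List X) (M : ℕ) :
    ∑ k ∈ range M, hd0 x0 (l.drop (k + 1)) ≤ dsum x0 l := by
  cases l with
  | nil => simp [hd0, dsum]
  | cons a m =>
    simp only [List.drop_succ_cons]
    calc _ ≤ dsum x0 m := sum_hd0_drop_le x0 m M
    _ ≤ dsum x0 (a :: m) := by rw [dsum_cons]; linarith [dist_nonneg (x := x0) (y := a)]

theorem sum_reindex (V : ℕ) (f : ℕ → ℝ) : ∀ K : ℕ,
    ∑ j ∈ range V, ∑ t ∈ range K, f (j + t * V) = ∑ k ∈ range (K * V), f k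
  | 0 => by simp
  | K + 1 => by
    have h1 : (K + 1) * V = K * V + V := by ring
    rw [h1, Finset.sum_range_add f (K * V) V]
    simp only [Finset.sum_range_succ, Finset.sum_add_distrib, sum_reindex V f K]
    congr 1
    exact Finset.sum_congr rfl fun j _ => by rw [Nat.add_comm]

theorem tsp_bddBelow (l : List X) :
    BddBelow { y : ℝ | ∃ p : List X, p.Perm l ∧ y = tourLen x0 p } := by
  refine ⟨0, ?_⟩
  rintro y ⟨p, -, rfl⟩
  exact tourLen_nonneg x0 p

theorem tspLen_le_tourLen {p l : List X} (h : p.Perm l) : tspLen x0 l ≤ tourLen x0 p :=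
  csInf_le (tsp_bddBelow x0 l) ⟨p, h, rfl⟩

theorem tspLen_nonneg (l : List X) : 0 ≤ tspLen x0 l :=
  Real.sInf_nonneg (by rintro y ⟨p, -, rfl⟩; exact tourLen_nonneg x0 p)

theorem le_tspLen {c : ℝ} {l : List X} (h : ∀ p : List X, p.Perm l → c ≤ tourLen x0 p) :
    c ≤ tspLen x0 l :=
  le_csInf ⟨tourLen x0 l, l, List.Perm.refl l, rfl⟩ (by rintro y ⟨p, hp, rfl⟩; exact h p hp)

theorem tspLen_perm {l1 l2 : List X} (h : l1.Perm l2) : tspLen x0 l1 = tspLen x0 l2 := by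
  unfold tspLen
  congr 1
  ext y
  exact ⟨fun ⟨p, hp, hy⟩ => ⟨p, hp.trans h, hy⟩, fun ⟨p, hp, hy⟩ => ⟨p, hp.trans h.symm, hy⟩⟩

theorem tspLen_append (l1 l2 : List X) :
    tspLen x0 (l1 ++ l2) ≤ tspLen x0 l1 + tspLen x0 l2 := by
  have h : tspLen x0 (l1 ++ l2) - tspLen x0 l2 ≤ tspLen x0 l1 := by
    refine le_csInf ⟨tourLen x0 l1, l1, List.Perm.refl l1, rfl⟩ ?_
    rintro y ⟨p1, hp1, rfl⟩
    have h2 : tspLen x0 (l1 ++ l2) - tourLen x0 p1 ≤ tspLen x0 l2 := by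
      refine le_csInf ⟨tourLen x0 l2, l2, List.Perm.refl l2, rfl⟩ ?_
      rintro y ⟨p2, hp2, rfl⟩
      have := tspLen_le_tourLen x0 (hp1.append hp2)
      have := tourLen_append_le x0 p1 p2
      linarith
    linarith
  linarith

theorem tspLen_flatten : ∀ P : List (List X),
    tspLen x0 P.flatten ≤ (P.map (tspLen x0)).sum
  | [] => by
    simpa [tourLen] using tspLen_le_tourLen x0 (List.Perm.refl ([] : List X))
  | b :: P => by
    simp only [List.flatten_cons, List.map_cons, List.sum_cons]
    calc tspLen x0 (b ++ P.flatten) ≤ tspLen x0 b + tspLen x0 P.flatten :=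
          tspLen_append x0 b P.flatten
    _ ≤ _ := by linarith [tspLen_flatten P]

set_option maxHeartbeats 1000000 in
theorem exists_partition {V : ℕ} (hV : 1 ≤ V) (p : List X) :
    ∃ P : List (List X), P.flatten = p ∧ (∀ b ∈ P, b.length ≤ V) ∧
      (P.map (tspLen x0)).sum ≤ tourLen x0 p + 2 * dsum x0 p / V := by
  set K := p.length with hK
  have hVpos : (0 : ℝ) < V := by exact_mod_cast hV
  -- the cost of the partition with first block of size j+1 and the rest of size V
  have hcost : ∀ j ∈ range V,
      ((listSplit ((j + 1) :: List.replicate K V) p).map (tourLen x0)).sum ≤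
        tourLen x0 p + 2 * Hsum x0 V K (p.drop (j + 1)) := by
    intro j _
    have h1 := sum_tour_listSplit x0 ((j + 1) :: List.replicate K V)
      (by rintro s hs
          rcases List.mem_cons.1 hs with rfl | hs
          · omega
          · rw [List.eq_of_mem_replicate hs]; exact hV) p
    have h2 : ((listSplit ((j + 1) :: List.replicate K V) p).map (hd0 x0)).sum =
        hd0 x0 p + Hsum x0 V K (p.drop (j + 1)) := by
      simp only [listSplit, List.map_cons, List.sum_cons,
        hsum_listSplit x0 hV K (p.drop (j + 1)), hd0_take x0 (by omega : 1 ≤ j + 1) p]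
    rw [h2] at h1
    linarith
  -- the total extra cost over all offsets is at most 2 * dsum
  have htotal : ∑ j ∈ range V, Hsum x0 V K (p.drop (j + 1)) ≤ dsum x0 p := by
    have h1 : ∀ j, Hsum x0 V K (p.drop (j + 1)) =
        ∑ t ∈ range (K + 1), hd0 x0 (p.drop ((j + t * V) + 1)) := by
      intro j
      rw [hsum_eq]
      refine Finset.sum_congr rfl fun t _ => ?_
      rw [List.drop_drop, show j + 1 + t * V = j + t * V + 1 from by omega]
    calc ∑ j ∈ range V, Hsum x0 V K (p.drop (j + 1))
        = ∑ j ∈ range V, ∑ t ∈ range (K + 1), (fun k => hd0 x0 (p.drop (k + 1))) (j + t * V) :=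
          Finset.sum_congr rfl fun j _ => h1 j
      _ = ∑ k ∈ range ((K + 1) * V), hd0 x0 (p.drop (k + 1)) :=
          sum_reindex V (fun k => hd0 x0 (p.drop (k + 1))) (K + 1)
      _ ≤ dsum x0 p := sum_hd0_drop_succ_le x0 p _
  -- averaging: some offset is at most the mean
  have havg : ∑ j ∈ range V,
      ((listSplit ((j + 1) :: List.replicate K V) p).map (tourLen x0)).sum ≤
      ∑ _j ∈ range V, (tourLen x0 p + 2 * dsum x0 p / V) := by
    calc ∑ j ∈ range V, ((listSplit ((j + 1) :: List.replicate K V) p).map (tourLen x0)).sum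
        ≤ ∑ j ∈ range V, (tourLen x0 p + 2 * Hsum x0 V K (p.drop (j + 1))) :=
          Finset.sum_le_sum hcost
      _ = V * tourLen x0 p + 2 * ∑ j ∈ range V, Hsum x0 V K (p.drop (j + 1)) := by
          rw [Finset.sum_add_distrib, Finset.sum_const, Finset.card_range, nsmul_eq_mul,
            ← Finset.mul_sum]
      _ ≤ V * tourLen x0 p + 2 * dsum x0 p := by linarith
      _ = ∑ _j ∈ range V, (tourLen x0 p + 2 * dsum x0 p / V) := by
          rw [Finset.sum_const, Finset.card_range, nsmul_eq_mul]
          field_simp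
  obtain ⟨j, hj, hle⟩ := Finset.exists_le_of_sum_le ⟨0, Finset.mem_range.2 (by omega)⟩ havg
  refine ⟨listSplit ((j + 1) :: List.replicate K V) p, flatten_listSplit _ p, ?_, ?_⟩
  · refine listSplit_length _ p ?_ ?_
    · rintro s hs
      rcases List.mem_cons.1 hs with rfl | hs
      · have := Finset.mem_range.1 hj; omega
      · rw [List.eq_of_mem_replicate hs]
    · simp only [List.sum_cons, List.sum_replicate, smul_eq_mul]
      have : K * 1 ≤ K * V := Nat.mul_le_mul_left K hV
      omega
  · calc ((listSplit ((j + 1) :: List.replicate K V) p).map (tspLen x0)).sum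
        ≤ ((listSplit ((j + 1) :: List.replicate K V) p).map (tourLen x0)).sum :=
          List.sum_le_sum fun b _ => tspLen_le_tourLen x0 (List.Perm.refl b)
      _ ≤ _ := hle

theorem dsum_flatten : ∀ P : List (List X), dsum x0 P.flatten = (P.map (dsum x0)).sum
  | [] => rfl
  | b :: P => by
    simp only [List.flatten_cons, List.map_cons, List.sum_cons, dsum_append,
      dsum_flatten P]

theorem block_bound {V : ℕ} (hV : 1 ≤ V) {b : List X} (hb : b.length ≤ V) :
    2 / (V : ℝ) * dsum x0 b ≤ tspLen x0 b := by
  have hVpos : (0 : ℝ) < V := by exact_mod_cast hV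
  refine le_tspLen x0 fun p hp => ?_
  have key : 2 * dsum x0 p ≤ (p.length : ℝ) * tourLen x0 p := by
    have h1 : (p.map fun a => 2 * dist x0 a).sum ≤ (p.map fun _ => tourLen x0 p).sum := by
      refine List.sum_le_sum fun a ha => ?_
      have := two_dist_le_tourLen x0 ha
      rwa [dist_comm] at this
    rw [List.sum_map_mul_left] at h1
    calc 2 * dsum x0 p ≤ (p.map fun _ => tourLen x0 p).sum := h1
    _ = (p.length : ℝ) * tourLen x0 p := by
        simp [List.map_const', List.sum_replicate, nsmul_eq_mul]
  have hlen : (p.length : ℝ) ≤ (V : ℝ) := by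
    exact_mod_cast hp.length_eq ▸ hb
  have htour := tourLen_nonneg x0 p
  have hds : dsum x0 p = dsum x0 b := dsum_perm x0 hp
  rw [div_mul_eq_mul_div, div_le_iff₀ hVpos]
  nlinarith [mul_le_mul_of_nonneg_right hlen htour]

theorem cvrp_bddBelow (V : ℕ) (l : List X) :
    BddBelow { y : ℝ | ∃ P : List (List X), P.flatten.Perm l ∧ (∀ b ∈ P, b.length ≤ V) ∧
      y = (P.map (tspLen x0)).sum } := by
  refine ⟨0, ?_⟩
  rintro y ⟨P, -, -, rfl⟩
  refine List.sum_nonneg ?_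
  rintro z hz
  obtain ⟨b, -, rfl⟩ := List.mem_map.1 hz
  exact tspLen_nonneg x0 b

theorem cvrp_nonempty {V : ℕ} (hV : 1 ≤ V) (l : List X) :
    Set.Nonempty { y : ℝ | ∃ P : List (List X), P.flatten.Perm l ∧
      (∀ b ∈ P, b.length ≤ V) ∧ y = (P.map (tspLen x0)).sum } := by
  refine ⟨_, l.map fun a => [a], ?_, ?_, rfl⟩
  · have : (l.map fun a => [a]).flatten = l := by induction l <;> simp [*]
    rw [this]
  · rintro b hb
    obtain ⟨a, -, rfl⟩ := List.mem_map.1 hb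
    simpa using hV

end Stmt19

open Stmt19 in
/-- For points `x_1, …, x_n` in a metric space with depot `x₀` and vehicle
capacity `V ≥ 1`, with `r̄ = (1/n) ∑ d(x_i, x₀)`:
`max (2 n r̄ / V) L_TSP ≤ L_CVRP ≤ 2 (n/V + 1) r̄ + L_TSP`. -/
theorem stmt_19 {X : Type*} [MetricSpace X] (x0 : X) (n : ℕ) (hn : 1 ≤ n)
    (x : Fin n → X) (V : ℕ) (hV : 1 ≤ V) :
    letI rbar : ℝ := (1 / (n : ℝ)) * ∑ i : Fin n, dist (x i) x0
    max (2 * (n : ℝ) * rbar / (V : ℝ)) (tspLen x0 (List.ofFn x))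
        ≤ cvrpLen x0 V (List.ofFn x)
    ∧ cvrpLen x0 V (List.ofFn x)
        ≤ 2 * ((n : ℝ) / (V : ℝ) + 1) * rbar + tspLen x0 (List.ofFn x) := by
  set rbar : ℝ := (1 / (n : ℝ)) * ∑ i : Fin n, dist (x i) x0 with hrbar
  set l := List.ofFn x with hl
  have hn0 : (n : ℝ) ≠ 0 := Nat.cast_ne_zero.2 (by omega)
  have hV0 : (V : ℝ) ≠ 0 := Nat.cast_ne_zero.2 (by omega)
  have hVpos : (0 : ℝ) < V := by exact_mod_cast hV
  have hrnn : 0 ≤ rbar := by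
    rw [hrbar]
    have : 0 ≤ ∑ i : Fin n, dist (x i) x0 := Finset.sum_nonneg fun i _ => dist_nonneg
    positivity
  have hds : dsum x0 l = ∑ i : Fin n, dist (x i) x0 := by
    simp [dsum, hl, List.map_ofFn, List.sum_ofFn, Function.comp, dist_comm]
  have hdl : dsum x0 l = (n : ℝ) * rbar := by
    rw [hds, hrbar]; field_simp
  constructor
  · refine max_le ?_ ?_
    · show _ ≤ sInf _
      refine le_csInf (cvrp_nonempty x0 hV l) ?_
      rintro y ⟨P, hP, hlenP, rfl⟩
      have h1 : (P.map fun b => 2 / (V : ℝ) * dsum x0 b).sum ≤ (P.map (tspLen x0)).sum :=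
        List.sum_le_sum fun b hb => block_bound x0 hV (hlenP b hb)
      rw [List.sum_map_mul_left] at h1
      have h2 : (P.map (dsum x0)).sum = dsum x0 l := by
        rw [← dsum_flatten, dsum_perm x0 hP]
      rw [h2] at h1
      calc 2 * (n : ℝ) * rbar / V = 2 / V * dsum x0 l := by rw [hdl]; field_simp
      _ ≤ _ := h1
    · show _ ≤ sInf _
      refine le_csInf (cvrp_nonempty x0 hV l) ?_
      rintro y ⟨P, hP, -, rfl⟩
      calc tspLen x0 l = tspLen x0 P.flatten := (tspLen_perm x0 hP).symm
      _ ≤ _ := tspLen_flatten x0 P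
  · have h : cvrpLen x0 V l - 2 * dsum x0 l / V ≤ tspLen x0 l := by
      refine le_tspLen x0 fun p hp => ?_
      obtain ⟨P, hfl, hlenP, hcost⟩ := exists_partition x0 hV p
      have hmem : cvrpLen x0 V l ≤ (P.map (tspLen x0)).sum :=
        csInf_le (cvrp_bddBelow x0 V l) ⟨P, hfl ▸ hp, hlenP, rfl⟩
      have hdp : dsum x0 p = dsum x0 l := dsum_perm x0 hp
      rw [hdp] at hcost
      linarith
    have hk : 2 * ((n : ℝ) / V + 1) * rbar = 2 * dsum x0 l / V + 2 * rbar := by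
      rw [hdl]; field_simp
    linarith
end
end
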